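/- arXiv:1411.0903 — 6 statements merged into one kernel-verified Lean document; each statement's English description precedes it below -/
import Mathlib

section
/- For real z ≠ 0, ∫_0^∞ cos(zv)/cosh²(πv) dv = z/(2π sinh(z/2)). -/
open MeasureTheory Real Set Filter Topology

lemma integral_sin_exp (z c : ℝ) (hc : 0 < c) :
    ∫ v in Set.Ioi (0:ℝ), Real.sin (z * v) * Real.exp (-c * v) = z / (z ^ 2 + c ^ 2) := by
  have hD : (0:ℝ) < z ^ 2 + c ^ 2 := by positivity
  set F : ℝ → ℝ := fun v => -Real.exp (-c * v) * (c * Real.sin (z * v) + z * Real.cos (z * v))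
      / (z ^ 2 + c ^ 2) with hF
  have hderiv : ∀ x ∈ Set.Ici (0:ℝ), HasDerivAt F (Real.sin (z * x) * Real.exp (-c * x)) x := by
    intro x _
    have hid : ∀ c' : ℝ, HasDerivAt (fun v : ℝ => c' * v) c' x := fun c' => by
      simpa using (hasDerivAt_id x).const_mul c'
    have h1 : HasDerivAt (fun v : ℝ => Real.exp (-c * v)) (-c * Real.exp (-c * x)) x := by
      simpa [mul_comm] using (hid (-c)).exp
    have h2 : HasDerivAt (fun v : ℝ => Real.sin (z * v)) (z * Real.cos (z * x)) x := by
      simpa [mul_comm] using (hid z).sin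
    have h3 : HasDerivAt (fun v : ℝ => Real.cos (z * v)) (-(z * Real.sin (z * x))) x := by
      simpa [mul_comm] using (hid z).cos
    have := (((h1.neg).mul ((h2.const_mul c).add (h3.const_mul z))).div_const (z ^ 2 + c ^ 2))
    refine this.congr_deriv ?_
    simp only [Pi.add_apply, Pi.neg_apply]
    field_simp
    ring
  have hint : IntegrableOn (fun v => Real.sin (z * v) * Real.exp (-c * v)) (Set.Ioi (0:ℝ)) := by
    refine (exp_neg_integrableOn_Ioi 0 hc).mono' ?_ ?_
    · exact (Real.continuous_sin.comp (continuous_const.mul continuous_id)).aestronglyMeasurable.mul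
        (Real.continuous_exp.comp (continuous_const.mul continuous_id)).aestronglyMeasurable
    · filter_upwards with x
      rw [Real.norm_eq_abs, abs_mul, abs_exp]
      calc |Real.sin (z * x)| * Real.exp (-c * x) ≤ 1 * Real.exp (-c * x) := by
            gcongr; exact Real.abs_sin_le_one _
        _ = Real.exp (-c * x) := one_mul _
  have htend : Tendsto F atTop (𝓝 0) := by
    have h1 : Tendsto (fun v : ℝ => Real.exp (-c * v)) atTop (𝓝 0) := by
      have : Tendsto (fun v : ℝ => c * v) atTop atTop :=
        Tendsto.const_mul_atTop hc tendsto_id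
      simpa [Function.comp_def, neg_mul] using
        Real.tendsto_exp_neg_atTop_nhds_zero.comp this
    have h2 : Tendsto (fun v : ℝ => Real.exp (-c * v) * ((|c| + |z|) / (z ^ 2 + c ^ 2)))
        atTop (𝓝 (0 * ((|c| + |z|) / (z ^ 2 + c ^ 2)))) := h1.mul_const _
    rw [zero_mul] at h2
    refine squeeze_zero_norm (fun v => ?_) h2
    have hb : |c * Real.sin (z * v) + z * Real.cos (z * v)| ≤ |c| + |z| := by
      calc |c * Real.sin (z * v) + z * Real.cos (z * v)|
          ≤ |c * Real.sin (z * v)| + |z * Real.cos (z * v)| := abs_add_le _ _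
        _ ≤ |c| * 1 + |z| * 1 := by
            rw [abs_mul, abs_mul]
            gcongr
            exacts [Real.abs_sin_le_one _, Real.abs_cos_le_one _]
        _ = |c| + |z| := by ring
    rw [hF]
    simp only [Real.norm_eq_abs, abs_div, abs_mul, abs_neg, abs_exp, abs_of_pos hD,
      mul_div_assoc]
    gcongr
  have := integral_Ioi_of_hasDerivAt_of_tendsto' hderiv hint htend
  rw [this, hF]
  simp
  field_simp

-- aux identities/bounds
lemma tanh_sub_one_eq (x : ℝ) :
    Real.sinh x / Real.cosh x - 1 = -2 * Real.exp (-2 * x) / (1 + Real.exp (-2 * x)) := by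
  have hc : Real.cosh x ≠ 0 := (Real.cosh_pos x).ne'
  have h1 : (1:ℝ) + Real.exp (-2 * x) ≠ 0 := by positivity
  rw [Real.sinh_eq, Real.cosh_eq]
  have he : Real.exp x * Real.exp (-x) = 1 := by
    rw [← Real.exp_add]; simp
  have he2 : Real.exp (-2 * x) = Real.exp (-x) * Real.exp (-x) := by
    rw [← Real.exp_add]; ring_nf
  field_simp at *
  nlinarith [Real.exp_pos x, Real.exp_pos (-x)]

lemma tanh_sub_one_abs_le {x : ℝ} (hx : 0 ≤ x) :
    |Real.sinh x / Real.cosh x - 1| ≤ 2 * Real.exp (-2 * x) := by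
  rw [tanh_sub_one_eq]
  rw [abs_div, abs_of_pos (by positivity : (0:ℝ) < 1 + Real.exp (-2*x))]
  rw [abs_of_nonpos (by nlinarith [Real.exp_pos (-2*x)] : -2 * Real.exp (-2*x) ≤ 0)]
  rw [div_le_iff₀ (by positivity)]
  nlinarith [Real.exp_pos (-2 * x)]

lemma inv_cosh_sq_le {x : ℝ} (hx : 0 ≤ x) :
    1 / Real.cosh x ^ 2 ≤ 4 * Real.exp (-2 * x) := by
  have h1 : Real.exp x / 2 ≤ Real.cosh x := by
    rw [Real.cosh_eq]; nlinarith [Real.exp_pos (-x)]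
  have h2 : (Real.exp x / 2) ^ 2 ≤ Real.cosh x ^ 2 := by
    have := Real.exp_pos x; nlinarith
  have h3 : (0:ℝ) < (Real.exp x / 2) ^ 2 := by positivity
  calc 1 / Real.cosh x ^ 2 ≤ 1 / (Real.exp x / 2) ^ 2 := by
        apply one_div_le_one_div_of_le h3 h2
    _ = 4 * Real.exp (-2 * x) := by
        have h4 : Real.exp (-2*x) = Real.exp (-x) * Real.exp (-x) := by
          rw [← Real.exp_add]; ring_nf
        have h5 : Real.exp x * Real.exp (-x) = 1 := by rw [← Real.exp_add]; simp
        rw [h4]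
        field_simp
        nlinarith [Real.exp_pos x, Real.exp_pos (-x)]

lemma twopi_pos : (0:ℝ) < 2 * Real.pi := by positivity

lemma integrable_cos_cosh (z : ℝ) :
    IntegrableOn (fun v => Real.cos (z * v) / Real.cosh (Real.pi * v) ^ 2) (Set.Ioi (0:ℝ)) := by
  refine ((exp_neg_integrableOn_Ioi 0 twopi_pos).const_mul 4).mono' ?_ ?_
  · apply Continuous.aestronglyMeasurable
    exact (Real.continuous_cos.comp (continuous_const.mul continuous_id)).div
      ((Real.continuous_cosh.comp (continuous_const.mul continuous_id)).pow 2)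
      (fun x => by positivity)
  · filter_upwards [ae_restrict_mem measurableSet_Ioi] with x (hx : 0 < x)
    rw [Real.norm_eq_abs, abs_div, abs_of_pos (by positivity : (0:ℝ) < Real.cosh (Real.pi*x)^2)]
    calc |Real.cos (z*x)| / Real.cosh (Real.pi*x)^2 ≤ 1 / Real.cosh (Real.pi*x)^2 := by
          gcongr; exact Real.abs_cos_le_one _
      _ ≤ 4 * Real.exp (-2 * (Real.pi * x)) := inv_cosh_sq_le (by positivity)
      _ = 4 * Real.exp (-(2*Real.pi) * x) := by ring_nf

lemma integrable_sin_tanh (z : ℝ) :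
    IntegrableOn (fun v => Real.sin (z * v) * (Real.sinh (Real.pi * v) / Real.cosh (Real.pi * v) - 1))
      (Set.Ioi (0:ℝ)) := by
  refine ((exp_neg_integrableOn_Ioi 0 twopi_pos).const_mul 2).mono' ?_ ?_
  · apply Continuous.aestronglyMeasurable
    exact (Real.continuous_sin.comp (continuous_const.mul continuous_id)).mul
      (((Real.continuous_sinh.comp (continuous_const.mul continuous_id)).div
        (Real.continuous_cosh.comp (continuous_const.mul continuous_id))
        (fun x => (Real.cosh_pos _).ne')).sub continuous_const)
  · filter_upwards [ae_restrict_mem measurableSet_Ioi] with x (hx : 0 < x)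
    rw [Real.norm_eq_abs, abs_mul]
    calc |Real.sin (z*x)| * |Real.sinh (Real.pi*x)/Real.cosh (Real.pi*x) - 1|
        ≤ 1 * (2 * Real.exp (-2 * (Real.pi * x))) := by
          exact mul_le_mul (Real.abs_sin_le_one _) (tanh_sub_one_abs_le (by positivity))
            (abs_nonneg _) zero_le_one
      _ = 2 * Real.exp (-(2*Real.pi) * x) := by ring_nf

lemma parts (z : ℝ) :
    ∫ v in Set.Ioi (0:ℝ), Real.cos (z * v) / Real.cosh (Real.pi * v) ^ 2
      = 1 / Real.pi + (z / Real.pi) *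
        ∫ v in Set.Ioi (0:ℝ), Real.sin (z * v) * (Real.sinh (Real.pi * v) / Real.cosh (Real.pi * v) - 1) := by
  have hπ : (0:ℝ) < Real.pi := Real.pi_pos
  set F : ℝ → ℝ := fun v =>
    Real.cos (z * v) * (Real.sinh (Real.pi * v) / Real.cosh (Real.pi * v) - 1) / Real.pi with hFdef
  set G : ℝ → ℝ := fun v =>
    Real.cos (z * v) / Real.cosh (Real.pi * v) ^ 2
      - (z / Real.pi) * (Real.sin (z * v) * (Real.sinh (Real.pi * v) / Real.cosh (Real.pi * v) - 1))
    with hGdef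
  have hderiv : ∀ x ∈ Set.Ici (0:ℝ), HasDerivAt F (G x) x := by
    intro x _
    have hc : Real.cosh (Real.pi * x) ≠ 0 := (Real.cosh_pos _).ne'
    have hid : ∀ c' : ℝ, HasDerivAt (fun v : ℝ => c' * v) c' x := fun c' => by
      simpa using (hasDerivAt_id x).const_mul c'
    have hcos : HasDerivAt (fun v : ℝ => Real.cos (z * v)) (-(z * Real.sin (z * x))) x := by
      simpa [mul_comm] using (hid z).cos
    have hsinh : HasDerivAt (fun v : ℝ => Real.sinh (Real.pi * v))
        (Real.pi * Real.cosh (Real.pi * x)) x := by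
      simpa [mul_comm] using (hid Real.pi).sinh
    have hcosh : HasDerivAt (fun v : ℝ => Real.cosh (Real.pi * v))
        (Real.pi * Real.sinh (Real.pi * x)) x := by
      simpa [mul_comm] using (hid Real.pi).cosh
    have hquot : HasDerivAt (fun v : ℝ => Real.sinh (Real.pi * v) / Real.cosh (Real.pi * v))
        (Real.pi / Real.cosh (Real.pi * x) ^ 2) x := by
      have := hsinh.div hcosh hc
      refine this.congr_deriv ?_
      have hid2 : Real.cosh (Real.pi*x)^2 - Real.sinh (Real.pi*x)^2 = 1 :=
        Real.cosh_sq_sub_sinh_sq _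
      field_simp
      nlinarith [hid2]
    have := ((hcos.mul (hquot.sub_const 1)).div_const Real.pi)
    refine this.congr_deriv ?_
    rw [hGdef]
    field_simp
    ring
  have hint : IntegrableOn G (Set.Ioi (0:ℝ)) := by
    exact (integrable_cos_cosh z).sub ((integrable_sin_tanh z).const_mul _)
  have htend : Tendsto F atTop (𝓝 0) := by
    have h1 : Tendsto (fun v : ℝ => 2 / Real.pi * Real.exp (-(2*Real.pi) * v)) atTop
        (𝓝 (2/Real.pi * 0)) := by
      refine Tendsto.const_mul _ ?_
      have h2 : Tendsto (fun v : ℝ => (2*Real.pi) * v) atTop atTop :=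
        Tendsto.const_mul_atTop twopi_pos tendsto_id
      simpa [Function.comp_def, neg_mul] using
        Real.tendsto_exp_neg_atTop_nhds_zero.comp h2
    rw [mul_zero] at h1
    refine squeeze_zero_norm' ?_ h1
    filter_upwards [eventually_ge_atTop (0:ℝ)] with v (hv : 0 ≤ v)
    rw [hFdef]
    simp only [Real.norm_eq_abs, abs_div, abs_mul, abs_of_pos hπ]
    calc |Real.cos (z*v)| * |Real.sinh (Real.pi*v)/Real.cosh (Real.pi*v) - 1| / Real.pi
        ≤ 1 * (2 * Real.exp (-2 * (Real.pi * v))) / Real.pi := by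
          gcongr
          · exact Real.abs_cos_le_one _
          · exact tanh_sub_one_abs_le (by positivity)
      _ = 2 / Real.pi * Real.exp (-(2*Real.pi) * v) := by ring_nf
  have hF0 : F 0 = -(1/Real.pi) := by
    rw [hFdef]
    simp
    ring
  have hmain := integral_Ioi_of_hasDerivAt_of_tendsto' hderiv hint htend
  rw [hF0] at hmain
  rw [hGdef] at hmain
  rw [integral_sub (integrable_cos_cosh z) ((integrable_sin_tanh z).const_mul _),
    integral_const_mul] at hmain
  linarith [hmain]

lemma integrable_sin_exp (z c : ℝ) (hc : 0 < c) :
    IntegrableOn (fun v => Real.sin (z * v) * Real.exp (-c * v)) (Set.Ioi (0:ℝ)) := by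
  refine (exp_neg_integrableOn_Ioi 0 hc).mono' ?_ ?_
  · exact (Real.continuous_sin.comp (continuous_const.mul continuous_id)).aestronglyMeasurable.mul
      (Real.continuous_exp.comp (continuous_const.mul continuous_id)).aestronglyMeasurable
  · filter_upwards with x
    rw [Real.norm_eq_abs, abs_mul, abs_exp]
    calc |Real.sin (z * x)| * Real.exp (-c * x) ≤ 1 * Real.exp (-c * x) := by
          gcongr; exact Real.abs_sin_le_one _
      _ = Real.exp (-c * x) := one_mul _

lemma summable_series (z : ℝ) :
    Summable (fun n : ℕ => (-1:ℝ)^n * (z / (z^2 + (2*Real.pi*(n+1))^2))) := by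
  refine Summable.of_norm ?_
  have hs : Summable (fun n : ℕ => |z| * (1 / ((n:ℝ)+1)^2)) := by
    apply Summable.mul_left
    have := (summable_nat_add_iff (f := fun n : ℕ => 1 / (n:ℝ)^2) 1).mpr
      (Real.summable_one_div_nat_pow.mpr one_lt_two)
    simpa using this
  refine hs.of_nonneg_of_le (fun n => norm_nonneg _) (fun n => ?_)
  rw [norm_mul, norm_pow, norm_neg, norm_one, one_pow, one_mul, Real.norm_eq_abs, abs_div]
  have h1 : ((n:ℝ)+1)^2 ≤ z^2 + (2*Real.pi*(n+1))^2 := by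
    have h3 : (2*Real.pi*((n:ℝ)+1))^2 = (2*Real.pi)^2 * ((n:ℝ)+1)^2 := by ring
    have h4 : (1:ℝ) ≤ (2*Real.pi)^2 := by nlinarith [Real.pi_gt_three]
    nlinarith [sq_nonneg ((n:ℝ)+1), sq_nonneg z]
  have h2 : (0:ℝ) < ((n:ℝ)+1)^2 := by positivity
  rw [abs_of_pos (lt_of_lt_of_le h2 h1)]
  exact div_le_div_of_nonneg_left (abs_nonneg z) h2 h1 |>.trans_eq (by rw [mul_one_div])
    |>.trans (le_refl _)

lemma sin_tanh_series (z : ℝ) :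
    ∫ v in Set.Ioi (0:ℝ), Real.sin (z * v) * (Real.sinh (Real.pi * v) / Real.cosh (Real.pi * v) - 1)
      = -2 * ∑' n : ℕ, (-1:ℝ)^n * (z / (z^2 + (2*Real.pi*(n+1))^2)) := by
  set f : ℕ → ℝ → ℝ := fun N v =>
    ∑ n ∈ Finset.range N, (-2) * (-1:ℝ)^n * (Real.sin (z*v) * Real.exp (-(2*Real.pi*(n+1)) * v))
    with hf
  have hx : ∀ v : ℝ, 0 < v → Real.exp (-(2*Real.pi) * v) < 1 := by
    intro v hv
    rw [Real.exp_lt_one_iff]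
    nlinarith [Real.pi_pos]
  -- key exponent identity
  have hexp : ∀ (n : ℕ) (v : ℝ), Real.exp (-(2*Real.pi*(n+1)) * v)
      = Real.exp (-(2*Real.pi) * v) ^ (n+1) := by
    intro n v
    rw [← Real.exp_nat_mul]
    congr 1
    push_cast
    ring
  -- dominated convergence
  have hdct : Tendsto (fun N => ∫ v in Set.Ioi (0:ℝ), f N v) atTop
      (𝓝 (∫ v in Set.Ioi (0:ℝ),
        Real.sin (z * v) * (Real.sinh (Real.pi * v) / Real.cosh (Real.pi * v) - 1))) := by
    refine tendsto_integral_of_dominated_convergence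
      (fun v => 4 * Real.exp (-(2*Real.pi) * v)) ?_ ?_ ?_ ?_
    · intro N
      apply Continuous.aestronglyMeasurable
      apply continuous_finset_sum
      intro n _
      exact continuous_const.mul ((Real.continuous_sin.comp (continuous_const.mul continuous_id)).mul
        (Real.continuous_exp.comp (continuous_const.mul continuous_id)))
    · exact (exp_neg_integrableOn_Ioi 0 twopi_pos).const_mul 4
    · intro N
      filter_upwards [ae_restrict_mem measurableSet_Ioi] with v (hv : 0 < v)
      set x := Real.exp (-(2*Real.pi) * v) with hxdef
      have hx0 : 0 < x := Real.exp_pos _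
      have hx1 : x < 1 := hx v hv
      have hfN : f N v = Real.sin (z*v) * (-2) * (x * ∑ n ∈ Finset.range N, (-x)^n) := by
        simp only [hf, Finset.mul_sum]
        refine Finset.sum_congr rfl fun n _ => ?_
        rw [hexp n v, ← hxdef, neg_pow]
        ring
      rw [hfN]
      have hgeom : |∑ n ∈ Finset.range N, (-x)^n| ≤ 2 := by
        rw [geom_sum_eq (by nlinarith : (-x) ≠ 1)]
        rw [abs_div]
        have hd : |(-x) - 1| = 1 + x := by rw [abs_of_neg (by nlinarith)]; ring
        rw [hd, div_le_iff₀ (by nlinarith)]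
        calc |(-x)^N - 1| ≤ |(-x)^N| + |(1:ℝ)| := abs_sub _ _
          _ = |(-x)^N| + 1 := by rw [abs_one]
          _ ≤ 1 + 1 := by
              have : |(-x)^N| ≤ 1 := by
                rw [abs_pow, abs_neg, abs_of_pos hx0]
                exact pow_le_one₀ hx0.le hx1.le
              linarith
          _ ≤ 2 * (1 + x) := by nlinarith
      rw [Real.norm_eq_abs, abs_mul, abs_mul, abs_neg, abs_two]
      have h5 : |Real.sin (z*v)| ≤ 1 := Real.abs_sin_le_one _
      have h6 : |x * ∑ n ∈ Finset.range N, (-x)^n| ≤ x * 2 := by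
        rw [abs_mul, abs_of_pos hx0]
        exact mul_le_mul_of_nonneg_left hgeom hx0.le
      have h7 : |Real.sin (z*v)| * |x * ∑ n ∈ Finset.range N, (-x)^n| ≤ 1 * (x * 2) :=
        mul_le_mul h5 h6 (abs_nonneg _) zero_le_one
      nlinarith [abs_nonneg (Real.sin (z*v)), abs_nonneg (x * ∑ n ∈ Finset.range N, (-x)^n)]
    · filter_upwards [ae_restrict_mem measurableSet_Ioi] with v (hv : 0 < v)
      set x := Real.exp (-(2*Real.pi) * v) with hxdef
      have hx0 : 0 < x := Real.exp_pos _
      have hx1 : x < 1 := hx v hv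
      have hfN : ∀ N, f N v = Real.sin (z*v) * (-2) *
          (x * ∑ n ∈ Finset.range N, (-x)^n) := by
        intro N
        simp only [hf, Finset.mul_sum]
        refine Finset.sum_congr rfl fun n _ => ?_
        rw [hexp n v, ← hxdef, neg_pow]
        ring
      have hlim : Real.sin (z*v) * (Real.sinh (Real.pi*v)/Real.cosh (Real.pi*v) - 1)
          = Real.sin (z*v) * (-2) * (x * (1 - (-x))⁻¹) := by
        rw [tanh_sub_one_eq]
        have hxe : Real.exp (-2 * (Real.pi * v)) = x := by rw [hxdef]; congr 1; ring
        rw [hxe]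
        have h1 : (1:ℝ) - (-x) = 1 + x := by ring
        rw [h1, div_eq_mul_inv]
        ring
      simp_rw [hfN, hlim]
      apply Tendsto.const_mul
      apply Tendsto.const_mul
      exact (hasSum_geometric_of_norm_lt_one (by rw [norm_neg, Real.norm_eq_abs, abs_of_pos hx0]; exact hx1)).tendsto_sum_nat
  -- compute ∫ f N
  have hintN : ∀ N, ∫ v in Set.Ioi (0:ℝ), f N v
      = ∑ n ∈ Finset.range N, (-2) * ((-1:ℝ)^n * (z / (z^2 + (2*Real.pi*(n+1))^2))) := by
    intro N
    rw [hf, integral_finset_sum]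
    · apply Finset.sum_congr rfl
      intro n _
      rw [integral_const_mul, integral_sin_exp z _ (by positivity)]
      ring
    · intro n _
      exact (integrable_sin_exp z _ (by positivity)).const_mul _
  simp_rw [hintN] at hdct
  have hsum := (summable_series z).hasSum
  have htsum : Tendsto (fun N => ∑ n ∈ Finset.range N,
      (-2) * ((-1:ℝ)^n * (z / (z^2 + (2*Real.pi*(n+1))^2)))) atTop
      (𝓝 (-2 * ∑' n : ℕ, (-1:ℝ)^n * (z / (z^2 + (2*Real.pi*(n+1))^2)))) := by
    simpa [Finset.mul_sum] using ((hsum.mul_left (-2)).tendsto_sum_nat)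
  exact tendsto_nhds_unique hdct htsum

lemma neg_one_zpow_inv (n : ℤ) : ((-1:ℂ)^n)⁻¹ = (-1:ℂ)^n := by
  rcases Int.even_or_odd n with he | ho
  · rw [he.neg_one_zpow]; norm_num
  · rw [ho.neg_one_zpow]; norm_num

lemma exp_int_pi (m : ℤ) : Complex.exp (m * (↑Real.pi * Complex.I)) = (-1:ℂ)^m := by
  rw [Complex.exp_int_mul, Complex.exp_pi_mul_I]

lemma coeff_calc (a : ℝ) (ha : a ≠ 0) (n : ℤ) :
    ∫ x in (-Real.pi)..Real.pi,
        Complex.exp (-(n:ℂ) * Complex.I * (x:ℂ)) * ((Real.cosh (a * x) : ℝ) : ℂ)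
      = (((-1:ℝ)^n * (2 * a * Real.sinh (Real.pi * a) / (a^2 + (n:ℝ)^2)) : ℝ) : ℂ) := by
  set c1 : ℂ := (a:ℂ) - n * Complex.I with hc1def
  set c2 : ℂ := -(a:ℂ) - n * Complex.I with hc2def
  have hc1 : c1 ≠ 0 := by
    intro h
    apply ha
    have := congrArg Complex.re h
    simpa [hc1def] using this
  have hc2 : c2 ≠ 0 := by
    intro h
    apply ha
    have h2 := congrArg Complex.re h
    simp [hc2def] at h2
    simpa using h2
  have hmulexp : ∀ A B C : ℂ, Complex.exp A * ((Complex.exp B + Complex.exp C)/2)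
      = (Complex.exp (A+B) + Complex.exp (A+C))/2 := by
    intro A B C
    rw [Complex.exp_add, Complex.exp_add]
    ring
  have hcongr : ∀ x ∈ Set.uIcc (-Real.pi) Real.pi,
      Complex.exp (-(n:ℂ) * Complex.I * (x:ℂ)) * ((Real.cosh (a * x) : ℝ) : ℂ)
        = (Complex.exp (c1 * x) + Complex.exp (c2 * x)) / 2 := by
    intro x _
    rw [Real.cosh_eq]
    push_cast
    rw [hmulexp]
    congr 2
    · rw [hc1def]; push_cast; ring
    · rw [hc2def]; push_cast; ring
  rw [intervalIntegral.integral_congr hcongr]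
  have hii : ∀ c : ℂ, IntervalIntegrable (fun x : ℝ => Complex.exp (c * x))
      volume (-Real.pi) Real.pi := fun c =>
    (Complex.continuous_exp.comp (continuous_const.mul Complex.continuous_ofReal)).intervalIntegrable _ _
  have hsplit : ∫ x in (-Real.pi)..Real.pi,
      (Complex.exp (c1 * x) + Complex.exp (c2 * x)) / 2
      = ((∫ x in (-Real.pi)..Real.pi, Complex.exp (c1 * x))
        + ∫ x in (-Real.pi)..Real.pi, Complex.exp (c2 * x)) / 2 := by
    simp_rw [div_eq_mul_inv]
    rw [intervalIntegral.integral_mul_const, intervalIntegral.integral_add (hii c1) (hii c2)]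
  rw [hsplit, integral_exp_mul_complex hc1, integral_exp_mul_complex hc2]
  have key : ∀ (t : ℝ) (m : ℤ) (w : ℂ), w = ↑t + (m:ℂ) * (↑Real.pi * Complex.I) →
      Complex.exp w = Complex.exp (t:ℂ) * (-1:ℂ)^m := by
    intro t m w hw
    rw [hw, Complex.exp_add, exp_int_pi]
  have e1 : Complex.exp (c1 * (Real.pi:ℂ)) = Complex.exp ((Real.pi * a : ℝ):ℂ) * (-1:ℂ)^n :=
    (key (Real.pi * a) (-n) _ (by rw [hc1def]; push_cast; ring)).trans
      (by rw [zpow_neg, neg_one_zpow_inv])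
  have e2 : Complex.exp (c1 * ((-Real.pi : ℝ):ℂ)) =
      Complex.exp ((-(Real.pi * a) : ℝ):ℂ) * (-1:ℂ)^n :=
    key (-(Real.pi * a)) n _ (by rw [hc1def]; push_cast; ring)
  have e3 : Complex.exp (c2 * (Real.pi:ℂ)) = Complex.exp ((-(Real.pi * a) : ℝ):ℂ) * (-1:ℂ)^n :=
    (key (-(Real.pi * a)) (-n) _ (by rw [hc2def]; push_cast; ring)).trans
      (by rw [zpow_neg, neg_one_zpow_inv])
  have e4 : Complex.exp (c2 * ((-Real.pi : ℝ):ℂ)) =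
      Complex.exp ((Real.pi * a : ℝ):ℂ) * (-1:ℂ)^n :=
    key (Real.pi * a) n _ (by rw [hc2def]; push_cast; ring)
  have hden : (a:ℂ)^2 + (n:ℂ)^2 ≠ 0 := by
    have hI : (Complex.I)^2 = -1 := Complex.I_sq
    have hprod : c1 * c2 = -((a:ℂ)^2 + (n:ℂ)^2) := by
      rw [hc1def, hc2def]
      linear_combination (n:ℂ)^2 * hI
    intro h
    apply mul_ne_zero hc1 hc2
    rw [hprod, h, neg_zero]
  rw [e1, e2, e3, e4, Real.sinh_eq]
  push_cast
  rw [hc1def, hc2def]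
  have hc1' : (a:ℂ) - n * Complex.I ≠ 0 := hc1
  have hc2' : -(a:ℂ) - n * Complex.I ≠ 0 := hc2
  field_simp
  have hI : Complex.I^2 = -1 := Complex.I_sq
  linear_combination (-2*(a:ℂ)*(n:ℂ)^2*
    (Complex.exp ((Real.pi:ℂ)*(a:ℂ)) - Complex.exp (-((Real.pi:ℂ)*(a:ℂ))))) * hI

lemma summable_int_aux (a : ℝ) (ha : a ≠ 0) (K : ℝ) :
    Summable (fun n : ℤ => K / (a^2 + (n:ℝ)^2)) := by
  have hnat : Summable (fun n : ℕ => K / (a^2 + (n:ℝ)^2)) := by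
    apply (summable_nat_add_iff 1).mp
    have hs : Summable (fun n : ℕ => |K| * (1 / ((n:ℝ)+1)^2)) := by
      apply Summable.mul_left
      have := (summable_nat_add_iff (f := fun n : ℕ => 1 / (n:ℝ)^2) 1).mpr
        (Real.summable_one_div_nat_pow.mpr one_lt_two)
      simpa using this
    refine Summable.of_abs (hs.of_nonneg_of_le (fun n => abs_nonneg _) (fun n => ?_))
    have h2 : (0:ℝ) < ((n:ℝ)+1)^2 := by positivity
    have h3 : (0:ℝ) < a^2 + (((n+1:ℕ)):ℝ)^2 := by positivity
    rw [abs_div, abs_of_pos h3]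
    have hle : ((n:ℝ)+1)^2 ≤ a^2 + (((n+1:ℕ)):ℝ)^2 := by
      push_cast
      nlinarith [sq_nonneg a]
    calc |K| / (a^2 + (((n+1:ℕ)):ℝ)^2) ≤ |K| / (((n:ℝ)+1)^2) :=
          div_le_div_of_nonneg_left (abs_nonneg K) h2 hle
      _ = |K| * (1 / ((n:ℝ)+1)^2) := by rw [mul_one_div]
  apply Summable.of_nat_of_neg <;> simpa using hnat

lemma hasSum_int_inv (a : ℝ) (ha : a ≠ 0) :
    HasSum (fun n : ℤ => (-1:ℝ)^n / (a^2 + (n:ℝ)^2))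
      (Real.pi / (a * Real.sinh (Real.pi * a))) := by
  haveI : Fact (0 < 2 * Real.pi) := ⟨by positivity⟩
  have hπ := Real.pi_pos
  set f₀ : ℝ → ℂ := fun x => ((Real.cosh (a * x) : ℝ) : ℂ) with hf₀
  have hend : f₀ (-Real.pi) = f₀ (-Real.pi + 2 * Real.pi) := by
    show ((Real.cosh (a * -Real.pi) : ℝ) : ℂ) = ((Real.cosh (a * (-Real.pi + 2*Real.pi)) : ℝ) : ℂ)
    congr 1
    rw [show a * -Real.pi = -(a * Real.pi) by ring, Real.cosh_neg]
    congr 1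
    ring
  have hcont : Continuous (AddCircle.liftIco (2*Real.pi) (-Real.pi) f₀) :=
    AddCircle.liftIco_continuous hend
      (Complex.continuous_ofReal.comp
        (Real.continuous_cosh.comp (continuous_const.mul continuous_id))).continuousOn
  set F : C(AddCircle (2*Real.pi), ℂ) := ⟨AddCircle.liftIco (2*Real.pi) (-Real.pi) f₀, hcont⟩
    with hFdef
  have hFcoe : ∀ x ∈ Set.Icc (-Real.pi) Real.pi, F (x : AddCircle (2*Real.pi)) = f₀ x := by
    intro x hx
    rcases lt_or_eq_of_le hx.2 with hlt | heq
    · have hmem : x ∈ Set.Ico (-Real.pi) (-Real.pi + 2*Real.pi) := ⟨hx.1, by linarith⟩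
      show AddCircle.liftIco (2*Real.pi) (-Real.pi) f₀ (x : AddCircle (2*Real.pi)) = f₀ x
      exact AddCircle.liftIco_coe_apply hmem
    · subst heq
      have hper : ((Real.pi : ℝ) : AddCircle (2*Real.pi)) = ((-Real.pi : ℝ) : AddCircle (2*Real.pi)) := by
        rw [← AddCircle.coe_add_period (2*Real.pi) (-Real.pi)]
        congr 1
        ring
      have hmem : (-Real.pi) ∈ Set.Ico (-Real.pi) (-Real.pi + 2*Real.pi) :=
        ⟨le_refl _, by linarith⟩
      show AddCircle.liftIco (2*Real.pi) (-Real.pi) f₀ ((Real.pi : ℝ) : AddCircle (2*Real.pi))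
        = f₀ Real.pi
      rw [hper, AddCircle.liftIco_coe_apply hmem, hend]
      congr 1
      ring
  have hr : ∀ n : ℤ, (0:ℝ) < a^2 + (n:ℝ)^2 := by
    intro n
    have : a^2 > 0 := by positivity
    nlinarith [sq_nonneg ((n:ℝ))]
  have hcoeff : ∀ n : ℤ, fourierCoeff (⇑F) n
      = (((-1:ℝ)^n * (a * Real.sinh (Real.pi*a) / (Real.pi * (a^2+(n:ℝ)^2))) : ℝ) : ℂ) := by
    intro n
    rw [fourierCoeff_eq_intervalIntegral (⇑F) n (-Real.pi)]
    rw [show -Real.pi + 2*Real.pi = Real.pi by ring]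
    have hcg : ∀ x ∈ Set.uIcc (-Real.pi) Real.pi,
        (fourier (-n) (x : AddCircle (2*Real.pi))) • F (x : AddCircle (2*Real.pi))
          = Complex.exp (-(n:ℂ) * Complex.I * (x:ℂ)) * ((Real.cosh (a * x) : ℝ) : ℂ) := by
      intro x hx
      rw [Set.uIcc_of_le (by linarith : -Real.pi ≤ Real.pi)] at hx
      rw [smul_eq_mul, hFcoe x hx, fourier_coe_apply]
      congr 2
      push_cast
      have hne : ((Real.pi:ℂ)) ≠ 0 := Complex.ofReal_ne_zero.mpr Real.pi_ne_zero
      field_simp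
    rw [intervalIntegral.integral_congr hcg, coeff_calc a ha n]
    rw [Complex.real_smul, ← Complex.ofReal_mul]
    congr 1
    have h3 := (hr n).ne'
    field_simp
  have hsummable : Summable (fourierCoeff (⇑F)) := by
    rw [show (fourierCoeff (⇑F)) = fun n : ℤ =>
      (((-1:ℝ)^n * (a * Real.sinh (Real.pi*a) / (Real.pi * (a^2+(n:ℝ)^2))) : ℝ) : ℂ)
      from funext hcoeff]
    rw [Complex.summable_ofReal]
    apply summable_abs_iff.mp
    have habs : (fun n : ℤ =>
        |(-1:ℝ)^n * (a * Real.sinh (Real.pi*a) / (Real.pi * (a^2+(n:ℝ)^2)))|)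
        = fun n : ℤ => (|a * Real.sinh (Real.pi*a)| / Real.pi) / (a^2+(n:ℝ)^2) := by
      funext n
      have h1 : |(-1:ℝ)^n| = 1 := by
        rcases Int.even_or_odd n with he | ho
        · rw [he.neg_one_zpow, abs_one]
        · rw [ho.neg_one_zpow, abs_neg, abs_one]
      rw [abs_mul, h1, one_mul, abs_div, abs_mul,
        abs_of_pos (mul_pos Real.pi_pos (hr n)), div_div]
    rw [habs]
    exact summable_int_aux a ha _
  have hpoint := has_pointwise_sum_fourier_series_of_summable hsummable (0 : AddCircle (2*Real.pi))
  have hF0 : F (0 : AddCircle (2*Real.pi)) = 1 := by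
    have h0 : ((0:ℝ) : AddCircle (2*Real.pi)) = (0 : AddCircle (2*Real.pi)) := rfl
    rw [← h0, hFcoe 0 ⟨by linarith, by linarith⟩, hf₀]
    norm_num
  rw [hF0] at hpoint
  simp only [fourier_eval_zero, smul_eq_mul, mul_one] at hpoint
  simp_rw [hcoeff] at hpoint
  rw [show (1:ℂ) = ((1:ℝ):ℂ) by norm_num] at hpoint
  have hreal := Complex.hasSum_ofReal.mp hpoint
  have hsinh : Real.sinh (Real.pi * a) ≠ 0 := by
    rw [Real.sinh_ne_zero]
    exact mul_ne_zero Real.pi_ne_zero ha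
  have hmul := hreal.mul_left (Real.pi / (a * Real.sinh (Real.pi * a)))
  rw [mul_one] at hmul
  convert hmul using 2 with n
  · rfl
  have h3 := (hr n).ne'
  field_simp

lemma summable_nat_aux (a : ℝ) (ha : a ≠ 0) (K : ℝ) :
    Summable (fun n : ℕ => K / (a^2 + (n:ℝ)^2)) := by
  apply (summable_nat_add_iff 1).mp
  have hs : Summable (fun n : ℕ => |K| * (1 / ((n:ℝ)+1)^2)) := by
    apply Summable.mul_left
    have := (summable_nat_add_iff (f := fun n : ℕ => 1 / (n:ℝ)^2) 1).mpr
      (Real.summable_one_div_nat_pow.mpr one_lt_two)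
    simpa using this
  refine Summable.of_abs (hs.of_nonneg_of_le (fun n => abs_nonneg _) (fun n => ?_))
  have h2 : (0:ℝ) < ((n:ℝ)+1)^2 := by positivity
  have h3 : (0:ℝ) < a^2 + (((n+1:ℕ)):ℝ)^2 := by positivity
  rw [abs_div, abs_of_pos h3]
  have hle : ((n:ℝ)+1)^2 ≤ a^2 + (((n+1:ℕ)):ℝ)^2 := by
    push_cast
    nlinarith [sq_nonneg a]
  calc |K| / (a^2 + (((n+1:ℕ)):ℝ)^2) ≤ |K| / (((n:ℝ)+1)^2) :=
        div_le_div_of_nonneg_left (abs_nonneg K) h2 hle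
    _ = |K| * (1 / ((n:ℝ)+1)^2) := by rw [mul_one_div]

lemma real_neg_one_zpow_inv (n : ℤ) : ((-1:ℝ)^n)⁻¹ = (-1:ℝ)^n := by
  rcases Int.even_or_odd n with he | ho
  · rw [he.neg_one_zpow]; norm_num
  · rw [ho.neg_one_zpow]; norm_num

/-- For real `z ≠ 0`, `∫_0^∞ cos(zv)/cosh²(πv) dv = z/(2π sinh(z/2))`. -/
theorem integral_cos_div_cosh_sq (z : ℝ) (hz : z ≠ 0) :
    ∫ v in Set.Ioi (0:ℝ), Real.cos (z * v) / Real.cosh (Real.pi * v) ^ 2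
      = z / (2 * Real.pi * Real.sinh (z / 2)) := by
  have hπ := Real.pi_pos
  set a := z / (2*Real.pi) with hadef
  have ha : a ≠ 0 := div_ne_zero hz (by positivity)
  have hzeq : z = 2*Real.pi*a := by rw [hadef]; field_simp
  have hr : ∀ t : ℝ, (0:ℝ) < a^2 + t^2 := by
    intro t
    have : (0:ℝ) < a^2 := by positivity
    nlinarith [sq_nonneg t]
  -- summability of the two nat series
  have habs0 : (fun n : ℕ => |(-1:ℝ)^n / (a^2 + (n:ℝ)^2)|)
      = fun n : ℕ => (1:ℝ) / (a^2 + (n:ℝ)^2) := by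
    funext n
    rw [abs_div, abs_pow, abs_neg, abs_one, one_pow, abs_of_pos (hr _)]
  have hsum0 : Summable (fun n : ℕ => (-1:ℝ)^n / (a^2 + (n:ℝ)^2)) := by
    apply Summable.of_abs
    rw [habs0]
    exact summable_nat_aux a ha 1
  have hsum1 : Summable (fun n : ℕ => (-1:ℝ)^n / (a^2 + ((n:ℝ)+1)^2)) := by
    apply Summable.of_abs
    have habs1 : (fun n : ℕ => |(-1:ℝ)^n / (a^2 + ((n:ℝ)+1)^2)|)
        = fun n : ℕ => (1:ℝ) / (a^2 + ((n:ℝ)+1)^2) := by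
      funext n
      rw [abs_div, abs_pow, abs_neg, abs_one, one_pow, abs_of_pos (hr _)]
    rw [habs1]
    have := (summable_nat_add_iff (f := fun n : ℕ => (1:ℝ) / (a^2 + (n:ℝ)^2)) 1).mpr
      (summable_nat_aux a ha 1)
    simpa using this
  set S0 := ∑' n : ℕ, (-1:ℝ)^n / (a^2 + (n:ℝ)^2) with hS0def
  set S1 := ∑' n : ℕ, (-1:ℝ)^n / (a^2 + ((n:ℝ)+1)^2) with hS1def
  have hS0 : HasSum (fun n : ℕ => (-1:ℝ)^n / (a^2 + (n:ℝ)^2)) S0 := hsum0.hasSum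
  have hS1 : HasSum (fun n : ℕ => (-1:ℝ)^n / (a^2 + ((n:ℝ)+1)^2)) S1 := hsum1.hasSum
  -- pair the integer sum
  have hpair := (hasSum_int_inv a ha).nat_add_neg_add_one
  have hpair' : HasSum (fun n : ℕ => (-1:ℝ)^n / (a^2 + (n:ℝ)^2)
      - (-1:ℝ)^n / (a^2 + ((n:ℝ)+1)^2)) (Real.pi / (a * Real.sinh (Real.pi * a))) := by
    convert hpair using 2 with n
    have h1 : ((-1:ℝ)^((n:ℤ))) = (-1:ℝ)^n := zpow_natCast _ _
    have h2 : ((-1:ℝ)^(-((n:ℤ)+1))) = -((-1:ℝ)^n) := by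
      rw [zpow_neg, real_neg_one_zpow_inv, zpow_add₀ (by norm_num : (-1:ℝ) ≠ 0),
        zpow_natCast, zpow_one]
      ring
    rw [h1, h2]
    push_cast
    ring
  have hLeq : Real.pi / (a * Real.sinh (Real.pi * a)) = S0 - S1 :=
    hpair'.unique (hS0.sub hS1)
  -- S0 = 1/a² - S1
  have hshift : HasSum (fun n : ℕ => (-1:ℝ)^(n+1) / (a^2 + ((n:ℝ)+1)^2)) (-S1) := by
    convert hS1.neg using 2 with n
    · rfl
    rw [pow_succ]
    ring
  have hS0eq : S0 = 1/a^2 - S1 := by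
    have hshift' : HasSum (fun n : ℕ => (-1:ℝ)^(n+1) / (a^2 + (((n+1:ℕ)):ℝ)^2)) (-S1) := by
      convert hshift using 2 with n
      push_cast
      ring_nf
    have h := (hasSum_nat_add_iff (f := fun n : ℕ => (-1:ℝ)^n / (a^2 + (n:ℝ)^2)) 1).mp hshift'
    have h2 := h.unique hS0
    simp [Finset.sum_range_one] at h2
    rw [one_div]
    linarith
  -- rewrite the goal
  rw [parts z, sin_tanh_series z]
  have hT : ∑' n : ℕ, (-1:ℝ)^n * (z / (z^2 + (2*Real.pi*(n+1))^2))
      = (a/(2*Real.pi)) * S1 := by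
    rw [hS1def, ← tsum_mul_left]
    apply tsum_congr
    intro n
    have hd1 : (0:ℝ) < z^2 + (2*Real.pi*((n:ℝ)+1))^2 := by positivity
    have hd2 : (0:ℝ) < a^2 + ((n:ℝ)+1)^2 := hr _
    rw [hzeq]
    field_simp
  rw [hT]
  have hS1val : S1 = (1/a^2 - Real.pi / (a * Real.sinh (Real.pi * a)))/2 := by
    rw [hLeq] at *
    linarith [hS0eq]
  rw [hS1val, hzeq]
  have hsinh : Real.sinh (2*Real.pi*a/2) = Real.sinh (Real.pi*a) := by
    congr 1
    ring
  rw [hsinh]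
  have hs0 : Real.sinh (Real.pi * a) ≠ 0 := by
    rw [Real.sinh_ne_zero]
    exact mul_ne_zero Real.pi_ne_zero ha
  field_simp
  ring
end

section
/- The convolution of ρ₁ with itself, ρ₂(x) = ∫_{-∞}^{∞} ρ₁(u) ρ₁(x-u) du with ρ₁(x) = (π/2) sech²(πx), satisfies ρ₂(x) = (π/sinh²(πx)) · (πx coth(πx) - 1) for x ≠ 0. -/
open Real Filter Topology Set MeasureTheory

-- tanh limits
lemma tanh_aux (t : ℝ) : Real.sinh t / Real.cosh t
    = (1 - Real.exp (-(2*t))) / (1 + Real.exp (-(2*t))) := by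
  have h1 : Real.cosh t ≠ 0 := (Real.cosh_pos t).ne'
  have h2 : (0:ℝ) < 1 + Real.exp (-(2*t)) := by positivity
  have e1 : Real.exp (-(2*t)) * Real.exp t = Real.exp (-t) := by
    rw [← Real.exp_add]; ring_nf
  rw [div_eq_div_iff h1 h2.ne', Real.sinh_eq, Real.cosh_eq]
  nlinarith [e1]

lemma exp_neg2_tendsto : Tendsto (fun t : ℝ => Real.exp (-(2*t))) atTop (𝓝 0) := by
  exact Real.tendsto_exp_neg_atTop_nhds_zero.comp (tendsto_id.const_mul_atTop two_pos)

lemma tanh_top : Tendsto (fun t : ℝ => Real.sinh t / Real.cosh t) atTop (𝓝 1) := by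
  simp only [tanh_aux]
  have h1 : Tendsto (fun t : ℝ => 1 - Real.exp (-(2*t))) atTop (𝓝 1) := by
    simpa using (tendsto_const_nhds (x := (1:ℝ)) (f := atTop)).sub exp_neg2_tendsto
  have h2 : Tendsto (fun t : ℝ => 1 + Real.exp (-(2*t))) atTop (𝓝 1) := by
    simpa using (tendsto_const_nhds (x := (1:ℝ)) (f := atTop)).add exp_neg2_tendsto
  have := h1.div h2 (by norm_num); rw [div_one] at this; exact this

lemma tanh_bot : Tendsto (fun t : ℝ => Real.sinh t / Real.cosh t) atBot (𝓝 (-1)) := by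
  have h := (tanh_top.comp tendsto_neg_atBot_atTop).neg
  have : (fun t : ℝ => -(Real.sinh (-t) / Real.cosh (-t)))
      = fun t : ℝ => Real.sinh t / Real.cosh t := by
    funext t; rw [Real.sinh_neg, Real.cosh_neg]; ring
  rw [← this]; simpa [Function.comp] using h

lemma logcosh_aux (t : ℝ) : Real.log (Real.cosh t) - t
    = Real.log ((1 + Real.exp (-(2*t))) / 2) := by
  have h1 : (0:ℝ) < Real.cosh t := Real.cosh_pos t
  have : Real.cosh t * Real.exp (-t) = (1 + Real.exp (-(2*t))) / 2 := by
    rw [Real.cosh_eq]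
    have e1 : Real.exp t * Real.exp (-t) = 1 := by rw [← Real.exp_add]; simp
    have e2 : Real.exp (-t) * Real.exp (-t) = Real.exp (-(2*t)) := by
      rw [← Real.exp_add]; ring_nf
    nlinarith
  rw [← this, Real.log_mul h1.ne' (Real.exp_pos _).ne', Real.log_exp]; ring

lemma logcosh_top : Tendsto (fun t : ℝ => Real.log (Real.cosh t) - t) atTop
    (𝓝 (Real.log (1/2))) := by
  simp only [logcosh_aux]
  have h : Tendsto (fun t : ℝ => (1 + Real.exp (-(2*t))) / 2) atTop (𝓝 ((1:ℝ)/2)) := by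
    have h2 : Tendsto (fun t : ℝ => 1 + Real.exp (-(2*t))) atTop (𝓝 1) := by
      simpa using (tendsto_const_nhds (x := (1:ℝ)) (f := atTop)).add exp_neg2_tendsto
    simpa using h2.div_const (2:ℝ)
  exact ((Real.continuousAt_log (by norm_num)).tendsto.comp h)

lemma logcosh_bot : Tendsto (fun t : ℝ => Real.log (Real.cosh t) + t) atBot
    (𝓝 (Real.log (1/2))) := by
  have h := logcosh_top.comp tendsto_neg_atBot_atTop
  have e : ((fun t : ℝ => Real.log (Real.cosh t) - t) ∘ Neg.neg)
      = fun t : ℝ => Real.log (Real.cosh t) + t := by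
    funext t; simp [Function.comp, Real.cosh_neg]
  rw [e] at h; simpa using h


section
variable (a : ℝ)

noncomputable def Fa : ℝ → ℝ := fun u =>
  Real.pi / 4 / Real.sinh a ^ 2 *
    (Real.sinh (a - Real.pi * u) / Real.cosh (a - Real.pi * u)
      - Real.sinh (Real.pi * u) / Real.cosh (Real.pi * u)
      + 2 * (Real.cosh a / Real.sinh a) *
        (Real.log (Real.cosh (Real.pi * u)) - Real.log (Real.cosh (a - Real.pi * u))))

noncomputable def Ia : ℝ → ℝ := fun u =>
  (Real.pi / 2 * (1 / Real.cosh (Real.pi * u)) ^ 2) *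
    (Real.pi / 2 * (1 / Real.cosh (a - Real.pi * u)) ^ 2)

end

lemma Fa_deriv (a : ℝ) (ha : a ≠ 0) (u : ℝ) : HasDerivAt (Fa a) (Ia a u) u := by
  have hs : Real.sinh a ≠ 0 := Real.sinh_ne_zero.2 ha
  have hp : Real.cosh (Real.pi * u) ≠ 0 := (Real.cosh_pos _).ne'
  have hq : Real.cosh (a - Real.pi * u) ≠ 0 := (Real.cosh_pos _).ne'
  have hpu : HasDerivAt (fun y : ℝ => Real.pi * y) Real.pi u := by
    simpa using (hasDerivAt_id u).const_mul Real.pi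
  have hau : HasDerivAt (fun y : ℝ => a - Real.pi * y) (-Real.pi) u := by
    have := (hasDerivAt_const u a).sub hpu; rw [zero_sub] at this; exact this
  have h1 : HasDerivAt (fun y : ℝ => Real.sinh (Real.pi * y))
      (Real.cosh (Real.pi * u) * Real.pi) u := (Real.hasDerivAt_sinh _).comp u hpu
  have h2 : HasDerivAt (fun y : ℝ => Real.cosh (Real.pi * y))
      (Real.sinh (Real.pi * u) * Real.pi) u := (Real.hasDerivAt_cosh _).comp u hpu
  have h3 : HasDerivAt (fun y : ℝ => Real.sinh (a - Real.pi * y))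
      (Real.cosh (a - Real.pi * u) * -Real.pi) u := (Real.hasDerivAt_sinh _).comp u hau
  have h4 : HasDerivAt (fun y : ℝ => Real.cosh (a - Real.pi * y))
      (Real.sinh (a - Real.pi * u) * -Real.pi) u := (Real.hasDerivAt_cosh _).comp u hau
  have hq1 := h3.div h4 hq
  have hq2 := h1.div h2 hp
  have hl1 : HasDerivAt (fun y : ℝ => Real.log (Real.cosh (Real.pi * y)))
      ((Real.cosh (Real.pi * u))⁻¹ * (Real.sinh (Real.pi * u) * Real.pi)) u :=
    by have := (Real.hasDerivAt_log hp).comp u h2; exact this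
  have hl2 : HasDerivAt (fun y : ℝ => Real.log (Real.cosh (a - Real.pi * y)))
      ((Real.cosh (a - Real.pi * u))⁻¹ * (Real.sinh (a - Real.pi * u) * -Real.pi)) u :=
    by have := (Real.hasDerivAt_log hq).comp u h4; exact this
  have hF := ((hq1.sub hq2).add ((hl1.sub hl2).const_mul
      (2 * (Real.cosh a / Real.sinh a)))).const_mul (Real.pi / 4 / Real.sinh a ^ 2)
  convert hF using 1
  show Ia a u = _
  rw [Ia]
  -- now the algebraic identity
  set p := Real.cosh (Real.pi * u) with hpdef
  set q := Real.cosh (a - Real.pi * u) with hqdef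
  set sp := Real.sinh (Real.pi * u) with hspdef
  set sq := Real.sinh (a - Real.pi * u) with hsqdef
  have hp2 : p ^ 2 - sp ^ 2 = 1 := by
    rw [hpdef, hspdef]; rw [Real.cosh_sq]; ring
  have hq2' : q ^ 2 - sq ^ 2 = 1 := by
    rw [hqdef, hsqdef]; rw [Real.cosh_sq]; ring
  have hseq : Real.sinh a = sp * q + p * sq := by
    rw [hspdef, hqdef, hpdef, hsqdef, ← Real.sinh_add]; ring_nf
  have hceq : Real.cosh a = p * q + sp * sq := by
    rw [hspdef, hqdef, hpdef, hsqdef, ← Real.cosh_add]; ring_nf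
  rw [hseq, hceq]
  have hpq : p * q ≠ 0 := mul_ne_zero hp hq
  have hs' : sp * q + p * sq ≠ 0 := by rw [← hseq]; exact hs
  clear_value p q sp sq
  field_simp
  have H : q * sp + p * sq ≠ 0 := by intro h; apply hs'; linarith
  rw [show q * sp - -(p * sq) = q * sp + p * sq by ring, mul_div_cancel_right₀ _ H,
    eq_div_iff (pow_ne_zero 2 H)]
  ring
  all_goals rfl

lemma lin_top : Tendsto (fun y : ℝ => Real.pi * y) atTop atTop :=
  tendsto_id.const_mul_atTop Real.pi_pos

lemma lin_top' (a : ℝ) : Tendsto (fun y : ℝ => Real.pi * y - a) atTop atTop :=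
  tendsto_atTop_add_const_right _ (-a) lin_top

lemma lin_bot (a : ℝ) : Tendsto (fun y : ℝ => a - Real.pi * y) atTop atBot := by
  have h := tendsto_neg_atTop_atBot.comp lin_top
  have := tendsto_atBot_add_const_left atTop a h
  simpa [sub_eq_add_neg, Function.comp] using this

lemma logdiff_top (a : ℝ) : Tendsto (fun y : ℝ =>
    Real.log (Real.cosh (Real.pi * y)) - Real.log (Real.cosh (a - Real.pi * y)))
    atTop (𝓝 a) := by
  have hdecomp : ∀ y : ℝ, Real.log (Real.cosh (Real.pi * y)) - Real.log (Real.cosh (a - Real.pi * y))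
      = ((Real.log (Real.cosh (Real.pi * y)) - Real.pi * y)
        - (Real.log (Real.cosh (Real.pi * y - a)) - (Real.pi * y - a))) + a := by
    intro y
    rw [show a - Real.pi * y = -(Real.pi * y - a) by ring, Real.cosh_neg]
    ring
  simp only [hdecomp]
  have T3a := logcosh_top.comp lin_top
  have T3b := logcosh_top.comp (lin_top' a)
  have := (T3a.sub T3b).add_const a
  simpa [Function.comp] using this

lemma Fa_top (a : ℝ) : Tendsto (Fa a) atTop
    (𝓝 (Real.pi / 4 / Real.sinh a ^ 2 *
      (-1 - 1 + 2 * (Real.cosh a / Real.sinh a) * a))) := by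
  have T1 : Tendsto (fun y : ℝ => Real.sinh (a - Real.pi * y) / Real.cosh (a - Real.pi * y))
      atTop (𝓝 (-1)) := by simpa [Function.comp_def] using tanh_bot.comp (lin_bot a)
  have T2 : Tendsto (fun y : ℝ => Real.sinh (Real.pi * y) / Real.cosh (Real.pi * y))
      atTop (𝓝 1) := by simpa [Function.comp_def] using tanh_top.comp lin_top
  have := ((T1.sub T2).add ((logdiff_top a).const_mul
      (2 * (Real.cosh a / Real.sinh a)))).const_mul (Real.pi / 4 / Real.sinh a ^ 2)
  exact this

lemma logdiff_bot (a : ℝ) : Tendsto (fun y : ℝ =>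
    Real.log (Real.cosh (Real.pi * y)) - Real.log (Real.cosh (a - Real.pi * y)))
    atBot (𝓝 (-a)) := by
  have hdecomp : ∀ y : ℝ, Real.log (Real.cosh (Real.pi * y)) - Real.log (Real.cosh (a - Real.pi * y))
      = ((Real.log (Real.cosh (Real.pi * y)) + Real.pi * y)
        - (Real.log (Real.cosh (Real.pi * y - a)) + (Real.pi * y - a))) + -a := by
    intro y
    rw [show a - Real.pi * y = -(Real.pi * y - a) by ring, Real.cosh_neg]
    ring
  simp only [hdecomp]
  have hlinb : Tendsto (fun y : ℝ => Real.pi * y) atBot atBot :=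
    tendsto_id.const_mul_atBot Real.pi_pos
  have hlinb' : Tendsto (fun y : ℝ => Real.pi * y - a) atBot atBot :=
    tendsto_atBot_add_const_right _ (-a) hlinb
  have T3a := logcosh_bot.comp hlinb
  have T3b := logcosh_bot.comp hlinb'
  have := (T3a.sub T3b).add_const (-a)
  simpa [Function.comp] using this

lemma Fa_bot (a : ℝ) : Tendsto (Fa a) atBot
    (𝓝 (Real.pi / 4 / Real.sinh a ^ 2 *
      (1 - -1 + 2 * (Real.cosh a / Real.sinh a) * -a))) := by
  have hlinb : Tendsto (fun y : ℝ => Real.pi * y) atBot atBot :=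
    tendsto_id.const_mul_atBot Real.pi_pos
  have hlint : Tendsto (fun y : ℝ => a - Real.pi * y) atBot atTop := by
    have h := tendsto_neg_atBot_atTop.comp hlinb
    have := tendsto_atTop_add_const_left atBot a h
    simpa [sub_eq_add_neg, Function.comp] using this
  have T1 : Tendsto (fun y : ℝ => Real.sinh (a - Real.pi * y) / Real.cosh (a - Real.pi * y))
      atBot (𝓝 1) := by simpa [Function.comp_def] using tanh_top.comp hlint
  have T2 : Tendsto (fun y : ℝ => Real.sinh (Real.pi * y) / Real.cosh (Real.pi * y))
      atBot (𝓝 (-1)) := by simpa [Function.comp_def] using tanh_bot.comp hlinb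
  have := ((T1.sub T2).add ((logdiff_bot a).const_mul
      (2 * (Real.cosh a / Real.sinh a)))).const_mul (Real.pi / 4 / Real.sinh a ^ 2)
  exact this

lemma Ia_nonneg (a : ℝ) (u : ℝ) : 0 ≤ Ia a u := by
  rw [Ia]
  positivity

lemma Ia_integrable (a : ℝ) (ha : a ≠ 0) : Integrable (Ia a) := by
  have hIoi : IntegrableOn (Ia a) (Ioi 0) :=
    integrableOn_Ioi_deriv_of_nonneg' (fun u _ => Fa_deriv a ha u)
      (fun u _ => Ia_nonneg a u) (Fa_top a)
  have hG : ∀ u : ℝ, HasDerivAt (fun y => -(Fa a (-y))) (Ia a (-u)) u := by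
    intro u
    have h := ((Fa_deriv a ha (-u)).comp u (hasDerivAt_neg u)).neg
    rw [mul_neg_one, neg_neg] at h; exact h
  have hGtop : Tendsto (fun y => -(Fa a (-y))) atTop
      (𝓝 (-(Real.pi / 4 / Real.sinh a ^ 2 *
        (1 - -1 + 2 * (Real.cosh a / Real.sinh a) * -a)))) := by
    exact ((Fa_bot a).comp tendsto_neg_atTop_atBot).neg
  have h' : IntegrableOn (fun u : ℝ => Ia a (-u)) (Ioi 0) :=
    integrableOn_Ioi_deriv_of_nonneg' (fun u _ => hG u)
      (fun u _ => Ia_nonneg a _) hGtop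
  have A : MeasurableEmbedding (fun x : ℝ => -x) :=
    (Homeomorph.neg ℝ).isClosedEmbedding.measurableEmbedding
  have hIio : IntegrableOn (Ia a) (Iio 0) := by
    have hmap := A.integrableOn_map_iff (f := Ia a) (s := Iio 0) (μ := volume)
    rw [Measure.map_neg_eq_self (volume : Measure ℝ)] at hmap
    rw [hmap]
    have hpre : (fun x : ℝ => -x) ⁻¹' (Iio 0) = Ioi 0 := by
      ext y; simp
    rw [hpre]
    exact h'
  have := hIio.union ((integrableOn_Ici_iff_integrableOn_Ioi (f := Ia a) (b := 0)).2 hIoi)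
  rwa [Iio_union_Ici, integrableOn_univ] at this

lemma key (a : ℝ) (ha : a ≠ 0) :
    ∫ u : ℝ, (Real.pi / 2 * (1 / Real.cosh (Real.pi * u)) ^ 2) *
        (Real.pi / 2 * (1 / Real.cosh (a - Real.pi * u)) ^ 2)
      = Real.pi / Real.sinh a ^ 2 * (a * (Real.cosh a / Real.sinh a) - 1) := by
  have hs : Real.sinh a ≠ 0 := Real.sinh_ne_zero.2 ha
  have h := MeasureTheory.integral_of_hasDerivAt_of_tendsto
    (fun u => Fa_deriv a ha u) (Ia_integrable a ha) (Fa_bot a) (Fa_top a)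
  have : ∫ u : ℝ, Ia a u
      = Real.pi / Real.sinh a ^ 2 * (a * (Real.cosh a / Real.sinh a) - 1) := by
    rw [h]; field_simp; ring
  simpa only [Ia] using this

/-- The self-convolution `ρ₂ = ρ₁ * ρ₁` of `ρ₁(x) = (π/2) sech²(πx)` satisfies
`ρ₂(x) = (π/sinh²(πx)) (πx coth(πx) - 1)` for `x ≠ 0`. -/
theorem rho_two_formula (x : ℝ) (hx : x ≠ 0) :
    ∫ u : ℝ, (Real.pi / 2 * (1 / Real.cosh (Real.pi * u)) ^ 2) *
        (Real.pi / 2 * (1 / Real.cosh (Real.pi * (x - u))) ^ 2)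
      = Real.pi / Real.sinh (Real.pi * x) ^ 2 *
          (Real.pi * x * (Real.cosh (Real.pi * x) / Real.sinh (Real.pi * x)) - 1) := by
  have ha : Real.pi * x ≠ 0 := mul_ne_zero Real.pi_ne_zero hx
  have := key (Real.pi * x) ha
  simpa only [mul_sub] using this
end

section
/- For ℓ ≥ 1 and any integer p with -1 ≤ p ≤ ℓ-1, the ℓ-th forward difference satisfies Δ^ℓ[ C(x+p, ℓ) ψ(x) ] = H_ℓ + ψ(x+p+1) for all x > 0, where C(x+p,ℓ) = (x+p)(x+p-1)···(x+p-ℓ+1)/ℓ! is the generalized binomial coefficient. -/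
/-- The forward difference operator `Δf(x) = f(x+1) - f(x)`. -/
def deltaOp (f : ℝ → ℝ) : ℝ → ℝ := fun x => f (x + 1) - f x

/-- The generalized binomial coefficient `C(y,ℓ) = y(y-1)⋯(y-ℓ+1)/ℓ!`. -/
noncomputable def genBinom (y : ℝ) (ℓ : ℕ) : ℝ :=
  (∏ i ∈ Finset.range ℓ, (y - i)) / (Nat.factorial ℓ)

/-- The digamma function `ψ = Γ'/Γ`. -/
noncomputable def digamma (x : ℝ) : ℝ := deriv (fun y => Real.log (Real.Gamma y)) x


lemma logGamma_diff {x : ℝ} (hx : 0 < x) :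
    DifferentiableAt ℝ (fun y => Real.log (Real.Gamma y)) x :=
  (Real.differentiableAt_Gamma (fun m => by
    have h : -(m : ℝ) ≤ 0 := neg_nonpos.mpr (Nat.cast_nonneg m)
    exact ne_of_gt (lt_of_le_of_lt h hx))).log (Real.Gamma_pos_of_pos hx).ne'

lemma digamma_add_one {x : ℝ} (hx : 0 < x) : digamma (x + 1) = digamma x + 1 / x := by
  have h1 : digamma (x + 1) = deriv (fun y => Real.log (Real.Gamma (y + 1))) x := by
    rw [digamma, ← deriv_comp_add_const]
  have h2 : (fun y => Real.log (Real.Gamma (y + 1)))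
      =ᶠ[nhds x] fun y => Real.log y + Real.log (Real.Gamma y) := by
    filter_upwards [eventually_gt_nhds hx] with y hy
    rw [Real.Gamma_add_one hy.ne', Real.log_mul hy.ne' (Real.Gamma_pos_of_pos hy).ne']
  rw [h1, h2.deriv_eq, deriv_fun_add (Real.differentiableAt_log hx.ne') (logGamma_diff hx),
    Real.deriv_log, digamma, one_div]
  ring

lemma genBinom_zero (y : ℝ) : genBinom y 0 = 1 := by simp [genBinom]

lemma genBinom_pascal (z : ℝ) (m : ℕ) :
    genBinom (z + 1) (m + 1) - genBinom z (m + 1) = genBinom z m := by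
  unfold genBinom
  rw [Finset.prod_range_succ', Finset.prod_range_succ]
  have h : (∏ i ∈ Finset.range m, (z + 1 - ((i : ℝ) + 1)))
      = ∏ i ∈ Finset.range m, (z - i) := Finset.prod_congr rfl (fun i _ => by push_cast; ring)
  have h1 : ((m : ℝ) + 1) ≠ 0 := by positivity
  have h2 : ((m.factorial : ℝ)) ≠ 0 := by positivity
  push_cast
  rw [h, Nat.factorial_succ]
  push_cast
  field_simp
  ring

lemma iter_congr {f g : ℝ → ℝ} {x : ℝ} (n : ℕ) (h : ∀ y, x ≤ y → f y = g y) :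
    deltaOp^[n] f x = deltaOp^[n] g x := by
  induction n generalizing f g with
  | zero => exact h x le_rfl
  | succ n ih =>
    rw [Function.iterate_succ_apply, Function.iterate_succ_apply]
    exact ih (fun y hy => by simp only [deltaOp]; rw [h y hy, h (y + 1) (by linarith)])

lemma iter_add (n : ℕ) (f g : ℝ → ℝ) (x : ℝ) :
    deltaOp^[n] (fun y => f y + g y) x = deltaOp^[n] f x + deltaOp^[n] g x := by
  induction n generalizing f g x with
  | zero => rfl
  | succ n ih =>
    rw [Function.iterate_succ_apply, Function.iterate_succ_apply,
      Function.iterate_succ_apply]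
    have h : deltaOp (fun y => f y + g y) = fun y => deltaOp f y + deltaOp g y := by
      funext y; simp only [deltaOp]; ring
    rw [h]; exact ih _ _ _

lemma iter_smul (n : ℕ) (c : ℝ) (f : ℝ → ℝ) (x : ℝ) :
    deltaOp^[n] (fun y => c * f y) x = c * deltaOp^[n] f x := by
  induction n generalizing f x with
  | zero => rfl
  | succ n ih =>
    rw [Function.iterate_succ_apply, Function.iterate_succ_apply]
    have h : deltaOp (fun y => c * f y) = fun y => c * deltaOp f y := by
      funext y; simp only [deltaOp]; ring
    rw [h]; exact ih _ _

lemma iter_sum {ι : Type*} (n : ℕ) (s : Finset ι) (f : ι → ℝ → ℝ) (x : ℝ) :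
    deltaOp^[n] (fun y => ∑ j ∈ s, f j y) x = ∑ j ∈ s, deltaOp^[n] (f j) x := by
  induction n generalizing f x with
  | zero => rfl
  | succ n ih =>
    rw [Function.iterate_succ_apply]
    have h : deltaOp (fun y => ∑ j ∈ s, f j y) = fun y => ∑ j ∈ s, deltaOp (f j) y := by
      funext y; simp [deltaOp, Finset.sum_sub_distrib]
    rw [h, ih]
    exact Finset.sum_congr rfl fun j _ => (Function.iterate_succ_apply deltaOp n (f j) ▸ rfl)

lemma iter_shift (n : ℕ) (f : ℝ → ℝ) (c x : ℝ) :
    deltaOp^[n] (fun y => f (y + c)) x = deltaOp^[n] f (x + c) := by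
  induction n generalizing f x with
  | zero => rfl
  | succ n ih =>
    rw [Function.iterate_succ_apply, Function.iterate_succ_apply]
    have h : deltaOp (fun y => f (y + c)) = fun y => deltaOp f (y + c) := by
      funext y; simp only [deltaOp]; rw [show y + c + 1 = y + 1 + c by ring]
    rw [h]; exact ih _ _

lemma iter_smul_right (n : ℕ) (c : ℝ) (f : ℝ → ℝ) (x : ℝ) :
    deltaOp^[n] (fun y => f y * c) x = deltaOp^[n] f x * c := by
  have h : (fun y => f y * c) = fun y => c * f y := by funext y; ring
  rw [h, iter_smul, mul_comm]

lemma iter_pow (n : ℕ) : ∀ k ≤ n, ∀ x : ℝ,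
    deltaOp^[n] (fun y => y ^ k) x = if k = n then (n.factorial : ℝ) else 0 := by
  induction n with
  | zero =>
    intro k hk x
    interval_cases k
    simp
  | succ n ih =>
    intro k hk x
    rw [Function.iterate_succ_apply]
    have hd : deltaOp (fun y : ℝ => y ^ k)
        = fun y => ∑ j ∈ Finset.range k, (k.choose j : ℝ) * y ^ j := by
      funext y
      simp only [deltaOp]
      rw [add_pow, Finset.sum_range_succ]
      simp only [one_pow, Nat.choose_self, Nat.cast_one, mul_one, Nat.sub_self, pow_zero]
      rw [add_sub_cancel_right]
      exact Finset.sum_congr rfl fun j _ => by ring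
    rw [hd, iter_sum]
    have hterm : ∀ j ∈ Finset.range k,
        (fun x => deltaOp^[n] (fun y => (k.choose j : ℝ) * y ^ j) x) x
          = if j = n then (k.choose j : ℝ) * n.factorial else 0 := by
      intro j hj
      have hjn : j ≤ n := by
        have := Finset.mem_range.1 hj; omega
      simp only [iter_smul, ih j hjn x]
      split <;> simp
    rw [Finset.sum_congr rfl hterm, Finset.sum_ite_eq' (Finset.range k)]
    rcases eq_or_ne k (n + 1) with hk1 | hk1
    · subst hk1
      simp only [Finset.mem_range, Nat.lt_succ_self, if_pos rfl, if_true]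
      rw [Nat.choose_succ_self_right]
      rw [Nat.factorial_succ]
      push_cast
      ring
    · have : n ∉ Finset.range k := by
        simp only [Finset.mem_range]; omega
      rw [if_neg this, if_neg hk1]

lemma iter_prod (s : Finset ℕ) (a : ℕ → ℝ) (n : ℕ) (h : s.card = n) (x : ℝ) :
    deltaOp^[n] (fun y => ∏ i ∈ s, (y + a i)) x = (n.factorial : ℝ) := by
  have expand : (fun y : ℝ => ∏ i ∈ s, (y + a i))
      = fun y => ∑ t ∈ s.powerset, y ^ t.card * ∏ i ∈ s \ t, a i := by
    funext y
    rw [Finset.prod_add]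
    exact Finset.sum_congr rfl fun t ht => by rw [Finset.prod_const]
  rw [expand, iter_sum]
  have hterm : ∀ t ∈ s.powerset,
      deltaOp^[n] (fun y => y ^ t.card * ∏ i ∈ s \ t, a i) x
        = if t = s then (n.factorial : ℝ) else 0 := by
    intro t ht
    have hts : t ⊆ s := Finset.mem_powerset.1 ht
    have htc : t.card ≤ n := h ▸ Finset.card_le_card hts
    rw [iter_smul_right, iter_pow n t.card htc x]
    rcases eq_or_ne t s with rfl | hne
    · simp [h]
    · have hlt : t.card < n := h ▸ Finset.card_lt_card (lt_of_le_of_ne hts hne)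
      rw [if_neg (by omega), if_neg hne, zero_mul]
  rw [Finset.sum_congr rfl hterm, Finset.sum_ite_eq' s.powerset,
    if_pos (Finset.mem_powerset.2 le_rfl)]

lemma iter_poly_part (m q : ℕ) (hq : q ≤ m) (x : ℝ) (hx : 0 < x) :
    deltaOp^[m] (fun y => genBinom (y + q) (m + 1) / y) x = 1 / (m + 1) := by
  set t := (Finset.range (m + 1)).erase q with ht
  have hqmem : q ∈ Finset.range (m + 1) := Finset.mem_range.2 (Nat.lt_succ_of_le hq)
  have htcard : t.card = m := by
    rw [ht, Finset.card_erase_of_mem hqmem, Finset.card_range]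
    omega
  have key : ∀ y, x ≤ y → genBinom (y + q) (m + 1) / y
      = (1 / ((m + 1).factorial : ℝ)) * ∏ i ∈ t, (y + ((q : ℝ) - i)) := by
    intro y hy
    have hy0 : y ≠ 0 := by linarith
    have h1 : (∏ i ∈ Finset.range (m + 1), (y + (q : ℝ) - i))
        = y * ∏ i ∈ t, (y + ((q : ℝ) - i)) := by
      rw [← Finset.mul_prod_erase (Finset.range (m + 1)) (fun i => y + (q : ℝ) - i) hqmem]
      congr 1
      · ring
      · exact Finset.prod_congr rfl fun i _ => by ring
    rw [genBinom, h1]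
    have h2 : (((m + 1).factorial : ℝ)) ≠ 0 := by positivity
    field_simp
  rw [iter_congr m key, iter_smul, iter_prod t _ m htcard x]
  have h2 : ((m : ℝ) + 1) ≠ 0 := by positivity
  have h3 : ((m.factorial : ℝ)) ≠ 0 := by positivity
  rw [Nat.factorial_succ]
  push_cast
  field_simp

lemma main_aux (ℓ : ℕ) : ∀ p : ℤ, -1 ≤ p → p ≤ (ℓ : ℤ) - 1 → ∀ x : ℝ, 0 < x →
    (deltaOp^[ℓ] fun y => genBinom (y + p) ℓ * digamma y) x
      = (∑ k ∈ Finset.range ℓ, (1 : ℝ) / (k + 1)) + digamma (x + p + 1) := by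
  induction ℓ with
  | zero =>
    intro p hp1 hp2 x hx
    have hp : p = -1 := by omega
    subst hp
    have harg : x + ((-1 : ℤ) : ℝ) + 1 = x := by push_cast; ring
    simp [genBinom, harg]
  | succ m ih =>
    intro p hp1 hp2 x hx
    rw [Function.iterate_succ_apply]
    rcases eq_or_lt_of_le hp1 with hpneg | hp0
    · -- p = -1
      have hp : p = -1 := hpneg.symm
      subst hp
      have key : ∀ y, x ≤ y →
          deltaOp (fun z => genBinom (z + ((-1 : ℤ) : ℝ)) (m + 1) * digamma z) y
            = genBinom (y + ((-1 : ℤ) : ℝ)) m * digamma y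
              + genBinom (y + ((0 : ℕ) : ℝ)) (m + 1) / y := by
        intro y hy
        have hy0 : 0 < y := lt_of_lt_of_le hx hy
        simp only [deltaOp]
        rw [digamma_add_one hy0]
        have e1 : y + 1 + ((-1 : ℤ) : ℝ) = (y + ((-1 : ℤ) : ℝ)) + 1 := by push_cast; ring
        have e2 : y + ((0 : ℕ) : ℝ) = (y + ((-1 : ℤ) : ℝ)) + 1 := by push_cast; ring
        have hpas := genBinom_pascal (y + ((-1 : ℤ) : ℝ)) m
        rw [e1, e2, ← hpas]
        ring
      rw [iter_congr m key, iter_add, ih (-1) (by omega) (by omega) x hx,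
        iter_poly_part m 0 (Nat.zero_le m) x hx, Finset.sum_range_succ]
      push_cast
      ring
    · -- 0 ≤ p
      have hp0' : 0 ≤ p := by omega
      set q := p.toNat with hqdef
      have hqp : (q : ℤ) = p := Int.toNat_of_nonneg hp0'
      have hqpr : ((q : ℕ) : ℝ) = ((p : ℤ) : ℝ) := by exact_mod_cast congrArg (fun z : ℤ => (z : ℝ)) hqp
      have hqm : q ≤ m := by omega
      have key : ∀ y, x ≤ y →
          deltaOp (fun z => genBinom (z + (p : ℝ)) (m + 1) * digamma z) y
            = genBinom (y + 1 + ((p - 1 : ℤ) : ℝ)) m * digamma (y + 1)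
              + genBinom (y + ((q : ℕ) : ℝ)) (m + 1) / y := by
        intro y hy
        have hy0 : 0 < y := lt_of_lt_of_le hx hy
        simp only [deltaOp]
        have hdig : digamma y = digamma (y + 1) - 1 / y := by
          rw [digamma_add_one hy0]; ring
        rw [hdig]
        have e1 : y + 1 + (p : ℝ) = (y + (p : ℝ)) + 1 := by ring
        have e2 : y + 1 + ((p - 1 : ℤ) : ℝ) = y + (p : ℝ) := by push_cast; ring
        have hpas := genBinom_pascal (y + (p : ℝ)) m
        rw [e1, e2, hqpr, ← hpas]
        ring
      have hshift : deltaOp^[m]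
            (fun y => genBinom (y + 1 + ((p - 1 : ℤ) : ℝ)) m * digamma (y + 1)) x
          = deltaOp^[m] (fun z => genBinom (z + ((p - 1 : ℤ) : ℝ)) m * digamma z) (x + 1) :=
        iter_shift m (fun z => genBinom (z + ((p - 1 : ℤ) : ℝ)) m * digamma z) 1 x
      rw [iter_congr m key, iter_add, hshift,
        ih (p - 1) (by omega) (by omega) (x + 1) (by linarith),
        iter_poly_part m q hqm x hx, Finset.sum_range_succ]
      have harg : x + 1 + ((p - 1 : ℤ) : ℝ) + 1 = x + (p : ℝ) + 1 := by push_cast; ring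
      rw [harg]
      push_cast
      ring

/-- For `ℓ ≥ 1`, an integer `-1 ≤ p ≤ ℓ-1`, and `x > 0`:
`Δ^ℓ[C(x+p,ℓ) ψ(x)] = H_ℓ + ψ(x+p+1)`. -/
theorem deltaOp_binom_digamma (ℓ : ℕ) (hℓ : 1 ≤ ℓ) (p : ℤ) (hp1 : -1 ≤ p)
    (hp2 : p ≤ (ℓ : ℤ) - 1) (x : ℝ) (hx : 0 < x) :
    (deltaOp^[ℓ] fun y => genBinom (y + p) ℓ * digamma y) x
      = (∑ k ∈ Finset.range ℓ, (1 : ℝ) / (k + 1)) + digamma (x + p + 1) :=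
  main_aux ℓ p hp1 hp2 x hx
end

section
/- For real β > 0, ∫_0^∞ x/((x² + β²)²(e^{2πx} - 1)) dx = -1/(8β³) - 1/(4β²) + ψ'(β)/(4β), where ψ' is the trigamma function. -/
/-- The trigamma function `ψ'`, the derivative of the digamma function. -/
noncomputable def trigamma (x : ℝ) : ℝ := deriv digamma x

open Real MeasureTheory Filter Topology Set


lemma tendsto_arctan_div_const {a : ℝ} (ha : 0 < a) :
    Tendsto (fun x : ℝ => arctan (x / a)) atTop (𝓝 (π / 2)) :=
  (Real.tendsto_arctan_atTop.mono_right nhdsWithin_le_nhds).comp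
    (tendsto_id.atTop_div_const ha)

lemma tendsto_zero_of_le_inv {g : ℝ → ℝ} (h : ∀ᶠ x in atTop, 0 ≤ g x ∧ g x ≤ 1 / x) :
    Tendsto g atTop (𝓝 0) := by
  apply tendsto_of_tendsto_of_tendsto_of_le_of_le' tendsto_const_nhds
    (tendsto_inv_atTop_zero.congr fun x => (one_div x).symm)
  · filter_upwards [h] with x hx using hx.1
  · filter_upwards [h] with x hx using hx.2

lemma tendsto_x_div_sq {a : ℝ} (ha : 0 < a) :
    Tendsto (fun x : ℝ => x / (x ^ 2 + a ^ 2)) atTop (𝓝 0) := by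
  apply tendsto_zero_of_le_inv
  filter_upwards [eventually_ge_atTop (1:ℝ)] with x hx
  constructor
  · positivity
  · rw [div_le_div_iff₀ (by positivity) (by linarith)]
    nlinarith

lemma tendsto_x_div_sq_sq {a : ℝ} (ha : 0 < a) :
    Tendsto (fun x : ℝ => x / (x ^ 2 + a ^ 2) ^ 2) atTop (𝓝 0) := by
  apply tendsto_zero_of_le_inv
  filter_upwards [eventually_ge_atTop (1:ℝ)] with x hx
  constructor
  · positivity
  · rw [div_le_div_iff₀ (by positivity) (by linarith)]
    nlinarith [sq_nonneg a, sq_nonneg x, sq_nonneg (x*a), sq_nonneg (x^2 - 1)]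

lemma tendsto_inv_sq_add {a : ℝ} (ha : 0 < a) :
    Tendsto (fun x : ℝ => (x ^ 2 + a ^ 2)⁻¹) atTop (𝓝 0) := by
  apply tendsto_zero_of_le_inv
  filter_upwards [eventually_ge_atTop (1:ℝ)] with x hx
  refine ⟨by positivity, ?_⟩
  rw [one_div, inv_le_inv₀ (by positivity) (by linarith)]
  nlinarith

lemma hasDerivAt_x_div {a : ℝ} (ha : 0 < a) (x : ℝ) :
    HasDerivAt (fun x : ℝ => x / (x ^ 2 + a ^ 2)) ((a ^ 2 - x ^ 2) / (x ^ 2 + a ^ 2) ^ 2) x := by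
  have h : HasDerivAt (fun x : ℝ => x / (x ^ 2 + a ^ 2))
      ((1 * (x ^ 2 + a ^ 2) - x * (2 * x ^ 1)) / (x ^ 2 + a ^ 2) ^ 2) x :=
    (hasDerivAt_id x).div ((hasDerivAt_pow 2 x).add_const _) (by positivity)
  convert h using 1; ring

lemma hasDerivAt_x_div_sq {a : ℝ} (ha : 0 < a) (x : ℝ) :
    HasDerivAt (fun x : ℝ => x / (x ^ 2 + a ^ 2) ^ 2)
      ((a ^ 2 - 3 * x ^ 2) / (x ^ 2 + a ^ 2) ^ 3) x := by
  have hne : (x:ℝ) ^ 2 + a ^ 2 ≠ 0 := by positivity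
  have h : HasDerivAt (fun x : ℝ => x / (x ^ 2 + a ^ 2) ^ 2)
      ((1 * (x ^ 2 + a ^ 2) ^ 2 - x * ((2:ℕ) * (x ^ 2 + a ^ 2) ^ 1 * (2 * x ^ 1))) /
        ((x ^ 2 + a ^ 2) ^ 2) ^ 2) x :=
    (hasDerivAt_id x).div (((hasDerivAt_pow 2 x).add_const (a^2)).pow 2) (by positivity)
  convert h using 1
  field_simp
  ring

lemma hasDerivAt_arctan_div {a : ℝ} (ha : 0 < a) (x : ℝ) :
    HasDerivAt (fun x : ℝ => arctan (x / a)) (a / (x ^ 2 + a ^ 2)) x := by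
  have h := (Real.hasDerivAt_arctan (x / a)).comp x ((hasDerivAt_id x).div_const a)
  refine h.congr_deriv ?_
  have : (1:ℝ) + (x/a)^2 = (x^2+a^2)/a^2 := by field_simp; ring
  rw [this]
  field_simp

lemma intA {a : ℝ} (ha : 0 < a) :
    (∫ x in Ioi (0:ℝ), 1 / ((x ^ 2 + a ^ 2) ^ 2)) = π / (4 * a ^ 3) ∧
      IntegrableOn (fun x : ℝ => 1 / ((x ^ 2 + a ^ 2) ^ 2)) (Ioi 0) := by
  set F := fun x : ℝ => 1 / (2 * a ^ 2) * (x / (x ^ 2 + a ^ 2)) + 1 / (2 * a ^ 3) * arctan (x / a)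
    with hF
  have hd : ∀ x ∈ Ici (0:ℝ), HasDerivAt F (1 / ((x ^ 2 + a ^ 2) ^ 2)) x := by
    intro x _
    have h := ((hasDerivAt_x_div ha x).const_mul (1 / (2 * a ^ 2))).add
      ((hasDerivAt_arctan_div ha x).const_mul (1 / (2 * a ^ 3)))
    refine h.congr_deriv ?_
    have h1 : x ^ 2 + a ^ 2 ≠ 0 := by positivity
    field_simp
    ring
  have hpos : ∀ x ∈ Ioi (0:ℝ), 0 ≤ 1 / ((x ^ 2 + a ^ 2) ^ 2) := fun x _ => by positivity
  have hlim : Tendsto F atTop (𝓝 (π / (4 * a ^ 3))) := by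
    have h := ((tendsto_x_div_sq ha).const_mul (1 / (2 * a ^ 2))).add
      ((tendsto_arctan_div_const ha).const_mul (1 / (2 * a ^ 3)))
    have e : π / (4 * a ^ 3) = 1 / (2 * a ^ 2) * 0 + 1 / (2 * a ^ 3) * (π / 2) := by
      rw [mul_zero, zero_add]; ring
    rw [e]; exact h
  refine ⟨?_, integrableOn_Ioi_deriv_of_nonneg' hd hpos hlim⟩
  rw [integral_Ioi_of_hasDerivAt_of_nonneg' hd hpos hlim]
  simp [hF]

lemma intB {a : ℝ} (ha : 0 < a) :
    (∫ x in Ioi (0:ℝ), x / (x ^ 2 + a ^ 2) ^ 2) = 1 / (2 * a ^ 2) ∧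
      IntegrableOn (fun x : ℝ => x / (x ^ 2 + a ^ 2) ^ 2) (Ioi 0) := by
  set F := fun x : ℝ => -(1 / 2) * (x ^ 2 + a ^ 2)⁻¹ with hF
  have hd : ∀ x ∈ Ici (0:ℝ), HasDerivAt F (x / (x ^ 2 + a ^ 2) ^ 2) x := by
    intro x _
    have h := ((((hasDerivAt_pow 2 x).add_const (a ^ 2)).inv (by positivity)).const_mul (-(1/2):ℝ))
    refine h.congr_deriv ?_
    have h1 : x ^ 2 + a ^ 2 ≠ 0 := by positivity
    field_simp
    norm_num
  have hpos : ∀ x ∈ Ioi (0:ℝ), 0 ≤ x / (x ^ 2 + a ^ 2) ^ 2 := fun x hx => by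
    have : (0:ℝ) < x := hx
    positivity
  have hlim : Tendsto F atTop (𝓝 0) := by
    have h := (tendsto_inv_sq_add ha).const_mul (-(1/2):ℝ)
    rw [mul_zero] at h
    exact h
  refine ⟨?_, integrableOn_Ioi_deriv_of_nonneg' hd hpos hlim⟩
  rw [integral_Ioi_of_hasDerivAt_of_nonneg' hd hpos hlim]
  simp [hF]
  field_simp

lemma intD {a : ℝ} (ha : 0 < a) :
    (∫ x in Ioi (0:ℝ), x ^ 2 / (x ^ 2 + a ^ 2) ^ 2) = π / (4 * a) ∧
      IntegrableOn (fun x : ℝ => x ^ 2 / (x ^ 2 + a ^ 2) ^ 2) (Ioi 0) := by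
  set F := fun x : ℝ => 1 / (2 * a) * arctan (x / a) + -(1 / 2) * (x / (x ^ 2 + a ^ 2)) with hF
  have hd : ∀ x ∈ Ici (0:ℝ), HasDerivAt F (x ^ 2 / (x ^ 2 + a ^ 2) ^ 2) x := by
    intro x _
    have h := ((hasDerivAt_arctan_div ha x).const_mul (1 / (2 * a))).add
      ((hasDerivAt_x_div ha x).const_mul (-(1/2):ℝ))
    refine h.congr_deriv ?_
    have h1 : x ^ 2 + a ^ 2 ≠ 0 := by positivity
    field_simp
    ring
  have hpos : ∀ x ∈ Ioi (0:ℝ), 0 ≤ x ^ 2 / (x ^ 2 + a ^ 2) ^ 2 := fun x _ => by positivity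
  have hlim : Tendsto F atTop (𝓝 (π / (4 * a))) := by
    have h := ((tendsto_arctan_div_const ha).const_mul (1 / (2 * a))).add
      ((tendsto_x_div_sq ha).const_mul (-(1/2):ℝ))
    have e : π / (4 * a) = 1 / (2 * a) * (π / 2) + -(1/2) * 0 := by
      rw [mul_zero, add_zero]; ring
    rw [e]; exact h
  refine ⟨?_, integrableOn_Ioi_deriv_of_nonneg' hd hpos hlim⟩
  rw [integral_Ioi_of_hasDerivAt_of_nonneg' hd hpos hlim]
  simp [hF]

lemma intC {a b : ℝ} (ha : 0 < a) (hb : 0 < b) :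
    (∫ x in Ioi (0:ℝ), x ^ 2 / ((x ^ 2 + a ^ 2) ^ 2 * (x ^ 2 + b ^ 2)))
        = π / (4 * a * (a + b) ^ 2) ∧
      IntegrableOn (fun x : ℝ => x ^ 2 / ((x ^ 2 + a ^ 2) ^ 2 * (x ^ 2 + b ^ 2))) (Ioi 0) := by
  rcases eq_or_ne b a with rfl | hba
  · set F := fun x : ℝ => 1/(8*b^3) * arctan (x/b) + 1/(8*b^2) * (x/(x^2+b^2))
      + -(1/4) * (x/(x^2+b^2)^2) with hF
    have hd : ∀ x ∈ Ici (0:ℝ),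
        HasDerivAt F (x ^ 2 / ((x ^ 2 + b ^ 2) ^ 2 * (x ^ 2 + b ^ 2))) x := by
      intro x _
      have h := (((hasDerivAt_arctan_div hb x).const_mul (1/(8*b^3))).add
        ((hasDerivAt_x_div hb x).const_mul (1/(8*b^2)))).add
        ((hasDerivAt_x_div_sq hb x).const_mul (-(1/4):ℝ))
      refine h.congr_deriv ?_
      have h1 : x ^ 2 + b ^ 2 ≠ 0 := by positivity
      field_simp
      ring
    have hpos : ∀ x ∈ Ioi (0:ℝ), 0 ≤ x ^ 2 / ((x ^ 2 + b ^ 2) ^ 2 * (x ^ 2 + b ^ 2)) :=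
      fun x _ => by positivity
    have hlim : Tendsto F atTop (𝓝 (π / (4 * b * (b + b) ^ 2))) := by
      have h := (((tendsto_arctan_div_const hb).const_mul (1/(8*b^3))).add
        ((tendsto_x_div_sq hb).const_mul (1/(8*b^2)))).add
        ((tendsto_x_div_sq_sq hb).const_mul (-(1/4):ℝ))
      have e : π / (4 * b * (b + b) ^ 2) = 1/(8*b^3) * (π/2) + 1/(8*b^2) * 0 + -(1/4) * 0 := by
        rw [mul_zero, mul_zero, add_zero, add_zero, show b + b = 2 * b by ring,
          one_div, inv_mul_eq_div, div_div]
        congr 1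
        ring
      rw [e]; exact h
    refine ⟨?_, integrableOn_Ioi_deriv_of_nonneg' hd hpos hlim⟩
    rw [integral_Ioi_of_hasDerivAt_of_nonneg' hd hpos hlim]
    simp [hF]
  · have hab : a ^ 2 - b ^ 2 ≠ 0 := by
      intro h
      have h2 : (a - b) * (a + b) = 0 := by nlinarith
      rcases mul_eq_zero.mp h2 with h3 | h3
      · exact hba (by linarith)
      · linarith
    set F := fun x : ℝ => (a^2+b^2)/(2*a*(a^2-b^2)^2) * arctan (x/a)
      + 1/(2*(a^2-b^2)) * (x/(x^2+a^2)) + -b/((a^2-b^2)^2) * arctan (x/b) with hF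
    have hd : ∀ x ∈ Ici (0:ℝ),
        HasDerivAt F (x ^ 2 / ((x ^ 2 + a ^ 2) ^ 2 * (x ^ 2 + b ^ 2))) x := by
      intro x _
      have h := (((hasDerivAt_arctan_div ha x).const_mul ((a^2+b^2)/(2*a*(a^2-b^2)^2))).add
        ((hasDerivAt_x_div ha x).const_mul (1/(2*(a^2-b^2))))).add
        ((hasDerivAt_arctan_div hb x).const_mul (-b/((a^2-b^2)^2)))
      refine h.congr_deriv ?_
      have h1 : x ^ 2 + a ^ 2 ≠ 0 := by positivity
      have h2 : x ^ 2 + b ^ 2 ≠ 0 := by positivity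
      field_simp
      ring
    have hpos : ∀ x ∈ Ioi (0:ℝ), 0 ≤ x ^ 2 / ((x ^ 2 + a ^ 2) ^ 2 * (x ^ 2 + b ^ 2)) :=
      fun x _ => by positivity
    have hlim : Tendsto F atTop (𝓝 (π / (4 * a * (a + b) ^ 2))) := by
      have h := (((tendsto_arctan_div_const ha).const_mul ((a^2+b^2)/(2*a*(a^2-b^2)^2))).add
        ((tendsto_x_div_sq ha).const_mul (1/(2*(a^2-b^2))))).add
        ((tendsto_arctan_div_const hb).const_mul (-b/((a^2-b^2)^2)))
      have e : π / (4 * a * (a + b) ^ 2) = (a^2+b^2)/(2*a*(a^2-b^2)^2) * (π/2)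
          + 1/(2*(a^2-b^2)) * 0 + -b/((a^2-b^2)^2) * (π/2) := by
        rw [mul_zero, add_zero]
        have hABne : a + b ≠ 0 := by positivity
        field_simp
        ring
      rw [e]; exact h
    refine ⟨?_, integrableOn_Ioi_deriv_of_nonneg' hd hpos hlim⟩
    rw [integral_Ioi_of_hasDerivAt_of_nonneg' hd hpos hlim]
    simp [hF]

lemma summable_inv_sq_succ : Summable (fun m : ℕ => 1 / ((m:ℝ) + 1) ^ 2) := by
  have h : Summable (fun n : ℕ => 1 / (n:ℝ) ^ 2) :=
    Real.summable_one_div_nat_pow.mpr (by norm_num)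
  have h2 := (summable_nat_add_iff 1).mpr h
  refine h2.congr fun n => ?_
  push_cast
  ring

lemma const_tendstoUniformlyOn {F : ℝ → ℝ} {s : Set ℝ} :
    TendstoUniformlyOn (fun _ : ℕ => F) F atTop s := by
  refine Metric.tendstoUniformlyOn_iff.2 fun ε hε => Eventually.of_forall fun n y _ => ?_
  rw [dist_self]
  exact hε

lemma term_eq {x : ℝ} (hx : 0 < x) (m : ℕ) :
    1 / ((m:ℝ) + 1) - 1 / (x + (m:ℝ) + 1) = x / (((m:ℝ) + 1) * (x + (m:ℝ) + 1)) := by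
  have h1 : ((m:ℝ) + 1) ≠ 0 := by positivity
  have h2 : (x + (m:ℝ) + 1) ≠ 0 := by positivity
  field_simp
  ring

lemma term_nonneg {x : ℝ} (hx : 0 < x) (m : ℕ) :
    0 ≤ 1 / ((m:ℝ) + 1) - 1 / (x + (m:ℝ) + 1) := by
  rw [term_eq hx m]
  positivity

lemma term_le {x R : ℝ} (hx : 0 < x) (hR : x ≤ R) (m : ℕ) :
    1 / ((m:ℝ) + 1) - 1 / (x + (m:ℝ) + 1) ≤ R * (1 / ((m:ℝ) + 1) ^ 2) := by
  rw [term_eq hx m]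
  have h1 : (0:ℝ) < (m:ℝ) + 1 := by positivity
  rw [mul_one_div, sq]
  gcongr
  · exact hx.le.trans hR
  · nlinarith

lemma summable_dgAux {x : ℝ} (hx : 0 < x) :
    Summable (fun m : ℕ => 1 / ((m:ℝ) + 1) - 1 / (x + (m:ℝ) + 1)) := by
  apply Summable.of_nonneg_of_le (term_nonneg hx) (term_le hx le_rfl)
  exact summable_inv_sq_succ.mul_left x

noncomputable def dgAux (x : ℝ) : ℝ :=
  -Real.eulerMascheroniConstant - 1 / x + ∑' m : ℕ, (1 / ((m:ℝ) + 1) - 1 / (x + (m:ℝ) + 1))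

lemma tendsto_log_sub_harmonic :
    Tendsto (fun n : ℕ => Real.log n - ∑ m ∈ Finset.range n, 1 / ((m:ℝ) + 1)) atTop
      (𝓝 (-Real.eulerMascheroniConstant)) := by
  have hH : ∀ n : ℕ, ∑ m ∈ Finset.range n, 1 / ((m:ℝ) + 1) = ((harmonic n : ℚ) : ℝ) := by
    intro n
    rw [harmonic]
    push_cast
    simp [one_div]
  have h1 : Tendsto (fun n : ℕ => -(Real.eulerMascheroniSeq n)) atTop
      (𝓝 (-Real.eulerMascheroniConstant)) := Real.tendsto_eulerMascheroniSeq.neg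
  have h2 : Tendsto (fun n : ℕ => Real.log ((n:ℝ) + 1) - Real.log n) atTop (𝓝 0) := by
    have h3 : Tendsto (fun n : ℕ => Real.log (1 + 1 / (n:ℝ))) atTop (𝓝 0) := by
      have h4 : Tendsto (fun n : ℕ => 1 + 1 / (n:ℝ)) atTop (𝓝 1) := by
        simpa using tendsto_const_nhds.add (tendsto_one_div_atTop_nhds_zero_nat (𝕜 := ℝ))
      have h5 := (Real.continuousAt_log one_ne_zero).tendsto.comp h4
      rwa [Real.log_one] at h5
    apply h3.congr'
    filter_upwards [eventually_ge_atTop 1] with n hn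
    have hn0 : (n:ℝ) ≠ 0 := by positivity
    rw [← Real.log_div (by positivity) hn0]
    congr 1
    field_simp
  have := h1.sub h2
  rw [sub_zero] at this
  apply this.congr
  intro n
  rw [Real.eulerMascheroniSeq, hH n]
  push_cast
  ring

lemma hasDerivAt_logGamma {x : ℝ} (hx : 0 < x) :
    HasDerivAt (fun y => Real.log (Real.Gamma y)) (dgAux x) x := by
  set s : Set ℝ := Ioo 0 (x+1) with hs_def
  have hxs : x ∈ s := ⟨hx, by linarith⟩
  set T : ℝ → ℝ := fun y => ∑' m : ℕ, (1 / ((m:ℝ) + 1) - 1 / (y + (m:ℝ) + 1)) with hT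
  set c : ℕ → ℝ := fun n => Real.log n - ∑ m ∈ Finset.range n, 1 / ((m:ℝ) + 1) with hc_def
  set f' : ℕ → ℝ → ℝ := fun n y =>
    -(1/y) + (c n + ∑ m ∈ Finset.range n, (1 / ((m:ℝ) + 1) - 1 / (y + (m:ℝ) + 1))) with hf'_def
  have hUnif : TendstoUniformlyOn f' (fun y => -(1/y) + (-Real.eulerMascheroniConstant + T y))
      atTop s := by
    apply TendstoUniformlyOn.add (const_tendstoUniformlyOn)
    apply TendstoUniformlyOn.add (tendsto_log_sub_harmonic.tendstoUniformlyOn_const s)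
    apply tendstoUniformlyOn_tsum_nat (u := fun m => (x+1) * (1 / ((m:ℝ) + 1) ^ 2))
      (summable_inv_sq_succ.mul_left (x+1))
    intro m y hy
    rw [Real.norm_eq_abs, abs_of_nonneg (term_nonneg hy.1 m)]
    exact term_le hy.1 hy.2.le m
  have hderiv : ∀ n : ℕ, ∀ y ∈ s, HasDerivAt (fun y => Real.BohrMollerup.logGammaSeq y n)
      (f' n y) y := by
    intro n y hy
    have hy0 : 0 < y := hy.1
    have h1 : HasDerivAt (fun y : ℝ => y * Real.log n + Real.log ((Nat.factorial n : ℕ) : ℝ))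
        (Real.log n) y := by
      simpa using ((hasDerivAt_id y).mul_const (Real.log n)).add_const (Real.log ((Nat.factorial n : ℕ) : ℝ))
    have h2 : HasDerivAt (fun y : ℝ => ∑ m ∈ Finset.range (n+1), Real.log (y + (m:ℝ)))
        (∑ m ∈ Finset.range (n+1), 1 / (y + (m:ℝ))) y := by
      apply HasDerivAt.fun_sum
      intro m _
      have hne : y + (m:ℝ) ≠ 0 := by positivity
      have := ((hasDerivAt_id y).add_const ((m:ℝ))).log hne
      simpa using this
    have h3 := h1.sub h2
    have heq : Real.log n - ∑ m ∈ Finset.range (n+1), 1 / (y + (m:ℝ)) = f' n y := by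
      rw [hf'_def, hc_def]
      simp only
      rw [Finset.sum_range_succ']
      rw [Finset.sum_sub_distrib]
      have : ∑ m ∈ Finset.range n, 1 / (y + ((m+1 : ℕ):ℝ)) =
          ∑ m ∈ Finset.range n, 1 / (y + (m:ℝ) + 1) := by
        apply Finset.sum_congr rfl
        intro m _
        push_cast
        ring_nf
      rw [this]
      push_cast
      ring
    rw [heq] at h3
    exact h3.congr_of_eventuallyEq (by
      filter_upwards with z
      rw [Real.BohrMollerup.logGammaSeq]
      rfl)
  have hptwise : ∀ y ∈ s, Tendsto (fun n => Real.BohrMollerup.logGammaSeq y n) atTop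
      (𝓝 (Real.log (Real.Gamma y))) := fun y hy => Real.BohrMollerup.tendsto_log_gamma hy.1
  have key := hasDerivAt_of_tendstoUniformlyOn isOpen_Ioo hUnif
    (Eventually.of_forall hderiv) hptwise hxs
  have : dgAux x = -(1/x) + (-Real.eulerMascheroniConstant + T x) := by
    rw [dgAux, hT]; ring
  rw [this]
  exact key

lemma summable_inv_sq_shift {y : ℝ} (hy : 0 < y) :
    Summable (fun m : ℕ => 1 / ((y + (m:ℝ) + 1) ^ 2)) := by
  apply Summable.of_nonneg_of_le (fun m => by positivity) (fun m => ?_) summable_inv_sq_succ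
  have h1 : (0:ℝ) < (m:ℝ) + 1 := by positivity
  gcongr
  linarith

lemma hasDerivAt_dgAux {β : ℝ} (hβ : 0 < β) :
    HasDerivAt dgAux (1 / β ^ 2 + ∑' m : ℕ, 1 / ((β + (m:ℝ) + 1) ^ 2)) β := by
  set s : Set ℝ := Ioo (β/2) (β+1) with hs_def
  have hβs : β ∈ s := ⟨by linarith, by linarith⟩
  set f : ℕ → ℝ → ℝ := fun N y =>
    -Real.eulerMascheroniConstant - 1 / y
      + ∑ m ∈ Finset.range N, (1 / ((m:ℝ) + 1) - 1 / (y + (m:ℝ) + 1)) with hf_def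
  set f' : ℕ → ℝ → ℝ := fun N y =>
    1 / y ^ 2 + ∑ m ∈ Finset.range N, 1 / ((y + (m:ℝ) + 1) ^ 2) with hf'_def
  have hUnif : TendstoUniformlyOn f'
      (fun y => 1 / y ^ 2 + ∑' m : ℕ, 1 / ((y + (m:ℝ) + 1) ^ 2)) atTop s := by
    apply TendstoUniformlyOn.add (const_tendstoUniformlyOn)
    apply tendstoUniformlyOn_tsum_nat (u := fun m => 1 / ((m:ℝ) + 1) ^ 2) summable_inv_sq_succ
    intro m y hy
    have hy0 : (0:ℝ) < y := lt_trans (by linarith) hy.1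
    rw [Real.norm_eq_abs, abs_of_nonneg (by positivity)]
    have h1 : (0:ℝ) < (m:ℝ) + 1 := by positivity
    gcongr
    linarith
  have hderiv : ∀ N : ℕ, ∀ y ∈ s, HasDerivAt (f N) (f' N y) y := by
    intro N y hy
    have hy0 : (0:ℝ) < y := lt_trans (by linarith) hy.1
    have h1 : HasDerivAt (fun y : ℝ => -Real.eulerMascheroniConstant - 1 / y) (1 / y ^ 2) y := by
      have h := (hasDerivAt_inv hy0.ne').const_sub (-Real.eulerMascheroniConstant)
      have e1 : (fun y : ℝ => -Real.eulerMascheroniConstant - y⁻¹)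
          = fun y : ℝ => -Real.eulerMascheroniConstant - 1 / y := by
        funext z; rw [one_div]
      rw [e1] at h
      refine h.congr_deriv ?_
      field_simp
    have h2 : HasDerivAt (fun y : ℝ => ∑ m ∈ Finset.range N,
        (1 / ((m:ℝ) + 1) - 1 / (y + (m:ℝ) + 1)))
        (∑ m ∈ Finset.range N, 1 / ((y + (m:ℝ) + 1) ^ 2)) y := by
      apply HasDerivAt.fun_sum
      intro m _
      have hne : y + (m:ℝ) + 1 ≠ 0 := by positivity
      have h3 : HasDerivAt (fun y : ℝ => y + (m:ℝ) + 1) 1 y := by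
        have h0 : HasDerivAt (fun x : ℝ => x + ((m:ℝ) + 1)) 1 y := by
          simpa using (hasDerivAt_id y).add_const ((m:ℝ) + 1)
        exact h0.congr_of_eventuallyEq (Eventually.of_forall fun z => by ring)
      have h4 := (h3.inv hne).const_sub (1 / ((m:ℝ) + 1))
      have e2 : (fun y : ℝ => 1 / ((m:ℝ) + 1) - (y + (m:ℝ) + 1)⁻¹)
          = fun y : ℝ => 1 / ((m:ℝ) + 1) - 1 / (y + (m:ℝ) + 1) := by
        funext z; simp
      simp only [Pi.inv_apply] at h4
      rw [e2] at h4
      refine h4.congr_deriv ?_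
      field_simp
    exact h1.add h2
  have hptwise : ∀ y ∈ s, Tendsto (fun N => f N y) atTop (𝓝 (dgAux y)) := by
    intro y hy
    have hy0 : (0:ℝ) < y := lt_trans (by linarith) hy.1
    rw [dgAux]
    exact tendsto_const_nhds.add ((summable_dgAux hy0).hasSum.tendsto_sum_nat)
  exact hasDerivAt_of_tendstoUniformlyOn isOpen_Ioo hUnif (Eventually.of_forall hderiv)
    hptwise hβs

lemma trigamma_series {β : ℝ} (hβ : 0 < β) :
    trigamma β = 1 / β ^ 2 + ∑' m : ℕ, 1 / ((β + (m:ℝ) + 1) ^ 2) := by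
  have h1 : digamma =ᶠ[𝓝 β] dgAux := by
    filter_upwards [Ioi_mem_nhds hβ] with y hy
    exact (hasDerivAt_logGamma hy).deriv
  rw [trigamma, h1.deriv_eq, (hasDerivAt_dgAux hβ).deriv]

lemma tendsto_sinh_prod (x : ℝ) :
    Tendsto (fun n : ℕ => π * x * ∏ j ∈ Finset.range n, ((1:ℝ) + x ^ 2 / ((j:ℝ) + 1) ^ 2))
      atTop (𝓝 (Real.sinh (π * x))) := by
  have h := Complex.tendsto_euler_sin_prod (x * Complex.I)
  have h2 : Complex.sin (↑π * (↑x * Complex.I)) = Real.sinh (π * x) * Complex.I := by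
    rw [show (↑π * (↑x * Complex.I) : ℂ) = ((π * x : ℝ) : ℂ) * Complex.I by push_cast; ring,
      Complex.sin_mul_I, Complex.ofReal_sinh]
  rw [h2] at h
  have h3 := (Complex.continuous_im.tendsto _).comp h
  have h4 : ∀ n : ℕ, (↑π * (↑x * Complex.I) *
      ∏ j ∈ Finset.range n, (1 - (↑x * Complex.I) ^ 2 / ((j:ℂ) + 1) ^ 2)).im
      = π * x * ∏ j ∈ Finset.range n, ((1:ℝ) + x ^ 2 / ((j:ℝ) + 1) ^ 2) := by
    intro n
    have e1 : ∀ j : ℕ, (1 - (↑x * Complex.I) ^ 2 / ((j:ℂ) + 1) ^ 2)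
        = (((1:ℝ) + x ^ 2 / ((j:ℝ) + 1) ^ 2 : ℝ) : ℂ) := by
      intro j
      rw [mul_pow, Complex.I_sq]
      push_cast
      ring
    rw [Finset.prod_congr rfl (fun j _ => e1 j), ← Complex.ofReal_prod]
    set r : ℝ := ∏ j ∈ Finset.range n, ((1:ℝ) + x ^ 2 / ((j:ℝ) + 1) ^ 2)
    have : (↑π * (↑x * Complex.I) * (r : ℂ)) = ((π * x * r : ℝ) : ℂ) * Complex.I := by
      push_cast; ring
    rw [this]
    simp
  have h5 : (Real.sinh (π * x) * Complex.I : ℂ).im = Real.sinh (π * x) := by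
    simp [← Complex.ofReal_mul, Complex.sinh_ofReal_re]
  rw [h5] at h3
  exact h3.congr h4

lemma coth_series {x : ℝ} (hx : 0 < x) :
    π * Real.cosh (π * x) / Real.sinh (π * x)
      = 1 / x + ∑' j : ℕ, 2 * x / (x ^ 2 + ((j:ℝ) + 1) ^ 2) := by
  set s : Set ℝ := Ioo 0 (x + 1) with hs_def
  have hxs : x ∈ s := ⟨hx, by linarith⟩
  set f : ℕ → ℝ → ℝ := fun N y =>
    Real.log (π * y) + ∑ j ∈ Finset.range N, Real.log (1 + y ^ 2 / ((j:ℝ) + 1) ^ 2) with hf_def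
  set f' : ℕ → ℝ → ℝ := fun N y =>
    1 / y + ∑ j ∈ Finset.range N, 2 * y / (y ^ 2 + ((j:ℝ) + 1) ^ 2) with hf'_def
  have hUnif : TendstoUniformlyOn f'
      (fun y => 1 / y + ∑' j : ℕ, 2 * y / (y ^ 2 + ((j:ℝ) + 1) ^ 2)) atTop s := by
    apply TendstoUniformlyOn.add (const_tendstoUniformlyOn)
    apply tendstoUniformlyOn_tsum_nat
      (u := fun j => 2 * (x + 1) * (1 / ((j:ℝ) + 1) ^ 2))
      (summable_inv_sq_succ.mul_left _)
    intro j y hy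
    have hy0 : (0:ℝ) < y := hy.1
    have hc : (0:ℝ) < ((j:ℝ) + 1) ^ 2 := by positivity
    rw [Real.norm_eq_abs, abs_of_nonneg (by positivity), mul_one_div]
    apply div_le_div₀ (by positivity) (by linarith [hy.2]) hc (by nlinarith [sq_nonneg y])
  have hderiv : ∀ N : ℕ, ∀ y ∈ s, HasDerivAt (f N) (f' N y) y := by
    intro N y hy
    have hy0 : (0:ℝ) < y := hy.1
    have h1 : HasDerivAt (fun y : ℝ => Real.log (π * y)) (1 / y) y := by
      have h := (((hasDerivAt_id y).const_mul π).log (by positivity)).congr_of_eventuallyEq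
        (Eventually.of_forall fun z => rfl)
      refine h.congr_deriv ?_
      rw [id_eq]
      field_simp
    have h2 : HasDerivAt (fun y : ℝ => ∑ j ∈ Finset.range N,
        Real.log (1 + y ^ 2 / ((j:ℝ) + 1) ^ 2))
        (∑ j ∈ Finset.range N, 2 * y / (y ^ 2 + ((j:ℝ) + 1) ^ 2)) y := by
      apply HasDerivAt.fun_sum
      intro j _
      have hc : (0:ℝ) < ((j:ℝ) + 1) ^ 2 := by positivity
      have hpos : (0:ℝ) < 1 + y ^ 2 / ((j:ℝ) + 1) ^ 2 := by positivity
      have hin : HasDerivAt (fun y : ℝ => 1 + y ^ 2 / ((j:ℝ) + 1) ^ 2)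
          ((2:ℕ) * y ^ 1 / ((j:ℝ) + 1) ^ 2) y :=
        ((hasDerivAt_pow 2 y).div_const (((j:ℝ) + 1) ^ 2)).const_add 1
      have h := hin.log hpos.ne'
      refine h.congr_deriv ?_
      rw [pow_one]
      field_simp
      ring
    exact h1.add h2
  have hptwise : ∀ y ∈ s, Tendsto (fun N => f N y) atTop
      (𝓝 (Real.log (Real.sinh (π * y)))) := by
    intro y hy
    have hy0 : (0:ℝ) < y := hy.1
    have hP := (tendsto_sinh_prod y).log (Real.sinh_pos_iff.mpr (by positivity)).ne'
    apply hP.congr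
    intro N
    have hterm : ∀ j : ℕ, (0:ℝ) < 1 + y ^ 2 / ((j:ℝ) + 1) ^ 2 := fun j => by positivity
    rw [Real.log_mul (by positivity) (Finset.prod_pos fun j _ => hterm j).ne',
      Real.log_prod fun j _ => (hterm j).ne']
  have key := hasDerivAt_of_tendstoUniformlyOn isOpen_Ioo hUnif (Eventually.of_forall hderiv)
    hptwise hxs
  have hs0 : Real.sinh (π * x) ≠ 0 := (Real.sinh_pos_iff.mpr (by positivity)).ne'
  have hd2 : HasDerivAt (fun y : ℝ => Real.log (Real.sinh (π * y)))
      (π * Real.cosh (π * x) / Real.sinh (π * x)) x := by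
    have hsinh : HasDerivAt (fun y : ℝ => Real.sinh (π * y)) (Real.cosh (π * x) * π) x := by
      have h := (Real.hasDerivAt_sinh (π * x)).comp x ((hasDerivAt_id x).const_mul π)
      exact h.congr_deriv (by ring)
    have h := hsinh.log hs0
    convert h using 1
    ring
  exact hd2.unique key

lemma summable_S {x : ℝ} (hx : 0 < x) :
    Summable (fun j : ℕ => 2 * x / (x ^ 2 + ((j:ℝ) + 1) ^ 2)) := by
  apply Summable.of_nonneg_of_le (fun j => by positivity) (fun j => ?_)
    (summable_inv_sq_succ.mul_left (2 * x))
  rw [mul_one_div]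
  exact div_le_div₀ (by positivity) le_rfl (by positivity) (by nlinarith [sq_nonneg x])

lemma coth_exp {x : ℝ} (hx : 0 < x) :
    π * Real.cosh (π * x) / Real.sinh (π * x)
      = π + 2 * π / (Real.exp (2 * π * x) - 1) := by
  have h1 : (1:ℝ) < Real.exp (2 * π * x) := by
    rw [← Real.exp_zero]
    exact Real.exp_lt_exp.mpr (by positivity)
  have h2 : Real.exp (2 * π * x) - 1 ≠ 0 := (sub_pos.mpr h1).ne'
  have hE : Real.exp (2 * π * x) = Real.exp (π * x) * Real.exp (π * x) := by
    rw [← Real.exp_add]; ring_nf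
  have hs0 : Real.sinh (π * x) ≠ 0 := (Real.sinh_pos_iff.mpr (by positivity)).ne'
  have hu : (0:ℝ) < Real.exp (π * x) := Real.exp_pos _
  rw [Real.sinh_eq, Real.exp_neg] at hs0
  rw [Real.cosh_eq, Real.sinh_eq, Real.exp_neg]
  rw [hE] at h2 ⊢
  field_simp at hs0 ⊢
  have h3 : Real.exp (π * x) ^ 2 - 1 ≠ 0 := by rw [sq]; exact h2
  field_simp
  ring

lemma key_pointwise {β : ℝ} (hβ : 0 < β) {x : ℝ} (hx : 0 < x) :
    x / ((x ^ 2 + β ^ 2) ^ 2 * (Real.exp (2 * π * x) - 1))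
      = 1 / (2 * π) * (1 / ((x ^ 2 + β ^ 2) ^ 2)) - 1 / 2 * (x / (x ^ 2 + β ^ 2) ^ 2)
        + ∑' j : ℕ, 1 / π * (x ^ 2 / ((x ^ 2 + β ^ 2) ^ 2 * (x ^ 2 + ((j:ℝ) + 1) ^ 2))) := by
  have hD : (0:ℝ) < (x ^ 2 + β ^ 2) ^ 2 := by positivity
  have ht : ∀ j : ℕ, 1 / π * (x ^ 2 / ((x ^ 2 + β ^ 2) ^ 2 * (x ^ 2 + ((j:ℝ) + 1) ^ 2)))
      = (x / (2 * π * (x ^ 2 + β ^ 2) ^ 2)) * (2 * x / (x ^ 2 + ((j:ℝ) + 1) ^ 2)) := by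
    intro j
    have hc : (0:ℝ) < x ^ 2 + ((j:ℝ) + 1) ^ 2 := by positivity
    field_simp
  rw [tsum_congr ht, tsum_mul_left]
  have hS : (∑' j : ℕ, 2 * x / (x ^ 2 + ((j:ℝ) + 1) ^ 2))
      = π + 2 * π / (Real.exp (2 * π * x) - 1) - 1 / x := by
    have h := coth_series hx
    rw [coth_exp hx] at h
    linarith [h]
  rw [hS]
  have h1 : (1:ℝ) < Real.exp (2 * π * x) := by
    rw [← Real.exp_zero]
    exact Real.exp_lt_exp.mpr (by positivity)
  have h2 : Real.exp (2 * π * x) - 1 ≠ 0 := (sub_pos.mpr h1).ne'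
  field_simp
  ring

lemma one_lt_exp_2pix {x : ℝ} (hx : 0 < x) : (1:ℝ) < Real.exp (2 * π * x) := by
  rw [← Real.exp_zero]
  exact Real.exp_lt_exp.mpr (by positivity)

lemma main_integrable {β : ℝ} (hβ : 0 < β) :
    IntegrableOn (fun x : ℝ => x / ((x ^ 2 + β ^ 2) ^ 2 * (Real.exp (2 * π * x) - 1)))
      (Ioi 0) := by
  set f : ℝ → ℝ := fun x => x / ((x ^ 2 + β ^ 2) ^ 2 * (Real.exp (2 * π * x) - 1)) with hf_def
  have hne : ∀ x ∈ Ioi (0:ℝ), (x ^ 2 + β ^ 2) ^ 2 * (Real.exp (2 * π * x) - 1) ≠ 0 := by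
    intro x hx
    exact (mul_pos (by positivity) (sub_pos.mpr (one_lt_exp_2pix hx))).ne'
  have hmeas : AEStronglyMeasurable f (volume.restrict (Ioi 0)) := by
    apply ContinuousOn.aestronglyMeasurable _ measurableSet_Ioi
    apply ContinuousOn.div continuousOn_id
      (Continuous.continuousOn (by continuity)) hne
  set C : ℝ := 2 * Real.exp 1 / β ^ 4 with hC_def
  have hbound : ∀ x ∈ Ioi (0:ℝ), ‖f x‖ ≤ C * Real.exp (-x) := by
    intro x hx
    have hx0 : (0:ℝ) < x := hx
    have hE : (0:ℝ) < Real.exp (2 * π * x) - 1 := sub_pos.mpr (one_lt_exp_2pix hx0)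
    have hD4 : β ^ 4 ≤ (x ^ 2 + β ^ 2) ^ 2 := by
      have h1 : β ^ 2 ≤ x ^ 2 + β ^ 2 := by nlinarith [sq_nonneg x]
      nlinarith [sq_nonneg β, sq_nonneg x]
    rw [norm_of_nonneg (by positivity)]
    rcases le_or_gt x 1 with hx1 | hx1
    · have hE2 : 2 * π * x ≤ Real.exp (2 * π * x) - 1 := by
        linarith [Real.add_one_le_exp (2 * π * x)]
      have hden : β ^ 4 * (2 * π * x) ≤ (x ^ 2 + β ^ 2) ^ 2 * (Real.exp (2 * π * x) - 1) :=
        mul_le_mul hD4 hE2 (by positivity) (by positivity)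
      calc f x ≤ x / (β ^ 4 * (2 * π * x)) := by
            exact div_le_div_of_nonneg_left hx0.le (by positivity) hden
        _ = 1 / (2 * π * β ^ 4) := by
            field_simp
        _ ≤ 2 / β ^ 4 := by
            rw [div_le_div_iff₀ (by positivity) (by positivity)]
            nlinarith [pi_gt_three, pow_pos hβ 4]
        _ = (2 / β ^ 4) * (Real.exp 1 * Real.exp (-1)) := by
            rw [← Real.exp_add]
            norm_num
        _ ≤ (2 / β ^ 4) * (Real.exp 1 * Real.exp (-x)) := by
            have h3 : Real.exp 1 * Real.exp (-1) ≤ Real.exp 1 * Real.exp (-x) :=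
              mul_le_mul_of_nonneg_left (Real.exp_le_exp.mpr (by linarith)) (Real.exp_pos 1).le
            exact mul_le_mul_of_nonneg_left h3 (by positivity)
        _ = C * Real.exp (-x) := by rw [hC_def]; ring
    · have h7 : (2:ℝ) ≤ Real.exp (2 * π * x) := by
        have h := Real.add_one_le_exp (2 * π * x)
        nlinarith [pi_gt_three]
      have hE2 : Real.exp (2 * π * x) / 2 ≤ Real.exp (2 * π * x) - 1 := by linarith
      have hden : β ^ 4 * (Real.exp (2 * π * x) / 2)
          ≤ (x ^ 2 + β ^ 2) ^ 2 * (Real.exp (2 * π * x) - 1) :=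
        mul_le_mul hD4 hE2 (by positivity) (by positivity)
      calc f x ≤ x / (β ^ 4 * (Real.exp (2 * π * x) / 2)) := by
            exact div_le_div_of_nonneg_left hx0.le (by positivity) hden
        _ = (2 / β ^ 4) * (x * Real.exp (-(2 * π * x))) := by
            rw [Real.exp_neg]
            field_simp
        _ ≤ (2 / β ^ 4) * (Real.exp x * Real.exp (-(2 * π * x))) := by
            have hxe : x ≤ Real.exp x := by linarith [Real.add_one_le_exp x]
            have h3 := mul_le_mul_of_nonneg_right hxe (Real.exp_pos (-(2 * π * x))).le
            exact mul_le_mul_of_nonneg_left h3 (by positivity)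
        _ = (2 / β ^ 4) * Real.exp (x - 2 * π * x) := by
            rw [← Real.exp_add]
            ring_nf
        _ ≤ (2 / β ^ 4) * Real.exp (-x) := by
            have h3 : Real.exp (x - 2 * π * x) ≤ Real.exp (-x) :=
              Real.exp_le_exp.mpr (by nlinarith [pi_gt_three])
            exact mul_le_mul_of_nonneg_left h3 (by positivity)
        _ ≤ C * Real.exp (-x) := by
            rw [hC_def]
            have h1 : (1:ℝ) ≤ Real.exp 1 := by linarith [Real.add_one_le_exp 1]
            have := Real.exp_pos (-x)
            rw [div_mul_eq_mul_div, div_mul_eq_mul_div, div_le_div_iff₀ (by positivity) (by positivity)]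
            nlinarith [mul_nonneg (mul_nonneg (sub_nonneg.mpr h1) this.le) (pow_pos hβ 4).le]
  have hgint : IntegrableOn (fun x : ℝ => C * Real.exp (-x)) (Ioi 0) := by
    have h := exp_neg_integrableOn_Ioi (0:ℝ) (zero_lt_one)
    have h2 : IntegrableOn (fun x : ℝ => Real.exp (-x)) (Ioi 0) := by
      apply h.congr_fun _ measurableSet_Ioi
      intro x _
      norm_num
    exact h2.const_mul C
  apply Integrable.mono' hgint hmeas
  filter_upwards [ae_restrict_mem measurableSet_Ioi] with x hx
  exact hbound x hx

/-- Entry 3.415.2 of Gradshteyn–Ryzhik: for real `β > 0`,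
`∫_0^∞ x/((x²+β²)²(e^{2πx}-1)) dx = -1/(8β³) - 1/(4β²) + ψ'(β)/(4β)`. -/
theorem GR_3_415_2 (β : ℝ) (hβ : 0 < β) :
    ∫ x in Set.Ioi (0:ℝ), x / ((x ^ 2 + β ^ 2) ^ 2 * (Real.exp (2 * Real.pi * x) - 1))
      = -1 / (8 * β ^ 3) - 1 / (4 * β ^ 2) + trigamma β / (4 * β) := by
  set f : ℝ → ℝ := fun x => x / ((x ^ 2 + β ^ 2) ^ 2 * (Real.exp (2 * π * x) - 1)) with hf_def
  set u : ℝ → ℝ := fun x => 1 / ((x ^ 2 + β ^ 2) ^ 2) with hu_def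
  set v : ℝ → ℝ := fun x => x / (x ^ 2 + β ^ 2) ^ 2 with hv_def
  set g : ℕ → ℝ → ℝ := fun n x =>
    1 / π * (x ^ 2 / ((x ^ 2 + β ^ 2) ^ 2 * (x ^ 2 + ((n:ℝ) + 1) ^ 2))) with hg_def
  set W : ℝ → ℝ := fun x => f x - 1 / (2 * π) * u x + 1 / 2 * v x with hW_def
  have hfInt : IntegrableOn f (Ioi 0) := main_integrable hβ
  have hu2 := intA hβ
  have hv2 := intB hβ
  have hWInt : IntegrableOn W (Ioi 0) :=
    (hfInt.sub (hu2.2.const_mul (1 / (2 * π)))).add (hv2.2.const_mul (1 / 2))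
  have hb : ∀ n : ℕ, (0:ℝ) < (n:ℝ) + 1 := fun n => by positivity
  have hgInt : ∀ n : ℕ, Integrable (g n) (volume.restrict (Ioi 0)) := fun n =>
    ((intC hβ (hb n)).2).const_mul (1 / π)
  have hgVal : ∀ n : ℕ, (∫ x in Ioi (0:ℝ), g n x) = 1 / (4 * β * (β + (n:ℝ) + 1) ^ 2) := by
    intro n
    rw [hg_def]
    simp only
    rw [integral_const_mul, (intC hβ (hb n)).1]
    rw [show β + ((n:ℝ) + 1) = β + (n:ℝ) + 1 by ring]
    have hc : β + (n:ℝ) + 1 ≠ 0 := by positivity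
    field_simp
  have hgNormVal : ∀ n : ℕ, (∫ x in Ioi (0:ℝ), ‖g n x‖) = 1 / (4 * β * (β + (n:ℝ) + 1) ^ 2) := by
    intro n
    rw [← hgVal n]
    congr 1
    funext x
    exact norm_of_nonneg (by positivity)
  have hgSum : Summable (fun n : ℕ => ∫ x in Ioi (0:ℝ), ‖g n x‖) := by
    apply Summable.congr ((summable_inv_sq_shift hβ).mul_left (1 / (4 * β)))
    intro n
    rw [hgNormVal n, one_div_mul_one_div]
  -- step 1: replace f by decomposition
  have step1 : (∫ x in Ioi (0:ℝ), f x)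
      = ∫ x in Ioi (0:ℝ), (1 / (2 * π) * u x - 1 / 2 * v x + W x) := by
    congr 1
    funext x
    rw [hW_def]
    ring
  -- step 2: split
  have step2 : (∫ x in Ioi (0:ℝ), (1 / (2 * π) * u x - 1 / 2 * v x + W x))
      = (1 / (2 * π)) * (∫ x in Ioi (0:ℝ), u x) - (1 / 2) * (∫ x in Ioi (0:ℝ), v x)
        + ∫ x in Ioi (0:ℝ), W x := by
    rw [integral_add (f := fun x => 1 / (2 * π) * u x - 1 / 2 * v x) (g := W)
        ((hu2.2.const_mul (1 / (2 * π))).sub (hv2.2.const_mul (1 / 2))) hWInt,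
      integral_sub (f := fun x => 1 / (2 * π) * u x) (g := fun x => 1 / 2 * v x)
        (hu2.2.const_mul (1 / (2 * π))) (hv2.2.const_mul (1 / 2)),
      integral_const_mul, integral_const_mul]
  -- step 3: the series integral
  have step3 : (∫ x in Ioi (0:ℝ), W x) = ∑' n : ℕ, 1 / (4 * β * (β + (n:ℝ) + 1) ^ 2) := by
    have hcongr : (∫ x in Ioi (0:ℝ), W x) = ∫ x in Ioi (0:ℝ), (∑' n : ℕ, g n x) := by
      apply setIntegral_congr_ae measurableSet_Ioi
      filter_upwards with x hx
      have hkey := key_pointwise hβ (show (0:ℝ) < x from hx)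
      rw [hW_def]
      simp only
      rw [hf_def, hu_def, hv_def]
      simp only
      rw [hkey, hg_def]
      ring
    rw [hcongr, ← integral_tsum_of_summable_integral_norm hgInt hgSum]
    exact tsum_congr hgVal
  rw [step1, step2, step3, hu2.1, hv2.1]
  have hT : ∑' n : ℕ, 1 / (4 * β * (β + (n:ℝ) + 1) ^ 2)
      = 1 / (4 * β) * (trigamma β - 1 / β ^ 2) := by
    rw [trigamma_series hβ]
    rw [show (1 / β ^ 2 + ∑' m : ℕ, 1 / ((β + (m:ℝ) + 1) ^ 2)) - 1 / β ^ 2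
        = ∑' m : ℕ, 1 / ((β + (m:ℝ) + 1) ^ 2) by ring, ← tsum_mul_left]
    exact tsum_congr fun n => by rw [one_div_mul_one_div]
  rw [hT]
  have hπ : (π:ℝ) ≠ 0 := pi_ne_zero
  field_simp
  ring
end

section
/- For b > 0 and ℓ ≥ 1, the 2ℓ-th derivative of u ↦ log(1 + bu²) equals 2(-1)^{ℓ-1} b^ℓ (2ℓ-1)! / (1+bu²)^ℓ · T_{2ℓ}(1/√(1+bu²)), where T_n is the Chebyshev polynomial of the first kind. -/
open Complex Polynomial

lemma cheb_re (c σ : ℝ) (h : c^2 + σ^2 = 1) (n : ℕ) :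
    (((c:ℂ) + σ*I)^n).re = (Polynomial.Chebyshev.T ℝ (n:ℤ)).eval c := by
  induction n using Nat.twoStepInduction with
  | zero => simp [Polynomial.Chebyshev.T_zero]
  | one => simp [Polynomial.Chebyshev.T_one]
  | more n ih2 ih1 =>
    have hc : ((c:ℂ)^2 + (σ:ℂ)^2) = 1 := by exact_mod_cast congrArg (Complex.ofReal) h
    have hz : ((c:ℂ) + σ*I)^(n+2) = 2*c*((c:ℂ)+σ*I)^(n+1) - ((c:ℂ)+σ*I)^n := by
      have h2 : ((c:ℂ)+σ*I)^2 = 2*c*((c:ℂ)+σ*I) - 1 := by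
        have hI : (I:ℂ)^2 = -1 := Complex.I_sq
        linear_combination hI * (σ:ℂ)^2 - hc
      calc ((c:ℂ) + σ*I)^(n+2) = ((c:ℂ)+σ*I)^n * ((c:ℂ)+σ*I)^2 := by ring
      _ = _ := by rw [h2]; ring
    have hT : Polynomial.Chebyshev.T ℝ ((n:ℤ)+2) = 2 * Polynomial.X * Polynomial.Chebyshev.T ℝ ((n:ℤ)+1) - Polynomial.Chebyshev.T ℝ (n:ℤ) :=
      Polynomial.Chebyshev.T_add_two ℝ n
    push_cast
    rw [hz]
    push_cast at ih1 ih2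
    simp only [Complex.sub_re, Complex.mul_re, Complex.ofReal_re, Complex.ofReal_im]
    rw [hT]
    simp only [Polynomial.eval_sub, Polynomial.eval_mul, Polynomial.eval_ofNat, Polynomial.eval_X]
    rw [← ih1, ← ih2]
    simp

noncomputable def wC (b u : ℝ) : ℂ := -(Real.sqrt b : ℂ) * I / (1 + (Real.sqrt b : ℂ) * I * u)

lemma denom_ne (b u : ℝ) : (1 + (Real.sqrt b : ℂ) * I * u) ≠ 0 := by
  intro h
  have := congrArg Complex.re h
  simp [Complex.add_re, Complex.mul_re] at this

lemma wC_hasDeriv (b u : ℝ) : HasDerivAt (wC b) (wC b u ^ 2) u := by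
  set s : ℂ := (Real.sqrt b : ℂ) with hs
  have h0 : HasDerivAt (fun x : ℝ => (x : ℂ)) 1 u := Complex.ofRealCLM.hasDerivAt
  have h1 : HasDerivAt (fun x : ℝ => 1 + s * I * x) (s * I * 1) u :=
    (h0.const_mul (s * I)).const_add 1
  have hnum : HasDerivAt (fun _ : ℝ => -s * I) (0 : ℂ) u := hasDerivAt_const u (-s * I)
  have h2 := hnum.div h1 (denom_ne b u)
  convert h2 using 1
  · rfl
  · rfl
  have hz := denom_ne b u
  unfold wC
  rw [← hs] at hz ⊢
  field_simp
  ring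

lemma wC_pow_hasDeriv' (b u : ℝ) (n : ℕ) :
    HasDerivAt (fun x => wC b x ^ (n + 1)) (((n:ℂ) + 1) * wC b u ^ (n + 2)) u := by
  induction n with
  | zero =>
    have h := wC_hasDeriv b u
    have heq : (fun x => wC b x ^ (0 + 1)) = wC b := by funext x; simp
    rw [heq]
    convert h using 1
    ring
  | succ n ih =>
    have h := ih.mul (wC_hasDeriv b u)
    have heq : (fun x => wC b x ^ (n + 1 + 1)) = fun x => wC b x ^ (n + 1) * wC b x := by
      funext x; ring
    rw [heq]
    convert h using 1
    · rfl
    · rfl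
    push_cast
    ring

lemma wC_pow_hasDeriv (b u : ℝ) (n : ℕ) (hn : 1 ≤ n) :
    HasDerivAt (fun x => wC b x ^ n) ((n : ℂ) * wC b u ^ (n + 1)) u := by
  obtain ⟨m, rfl⟩ : ∃ m, n = m + 1 := ⟨n - 1, by omega⟩
  have h := wC_pow_hasDeriv' b u m
  convert h using 2 <;> push_cast <;> ring

lemma main_formula (b : ℝ) (hb : 0 < b) (n : ℕ) (hn : 1 ≤ n) (u : ℝ) :
    iteratedDeriv n (fun t => Real.log (1 + b * t ^ 2)) u
      = -2 * (Nat.factorial (n - 1)) * (wC b u ^ n).re := by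
  induction n, hn using Nat.le_induction generalizing u with
  | base =>
    have hpos : (0:ℝ) < 1 + b * u ^ 2 := by positivity
    have hg : HasDerivAt (fun t : ℝ => 1 + b * t ^ 2) (b * (2 * u ^ 1)) u :=
      ((hasDerivAt_pow 2 u).const_mul b).const_add 1
    have hf := hg.log hpos.ne'
    rw [iteratedDeriv_one, hf.deriv]
    have hs2 : Real.sqrt b ^ 2 = b := Real.sq_sqrt hb.le
    have hmul : Real.sqrt b * Real.sqrt b = b := Real.mul_self_sqrt hb.le
    have h2pos : (0:ℝ) < 1 + Real.sqrt b * u * (Real.sqrt b * u) := by nlinarith [sq_nonneg (Real.sqrt b * u)]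
    unfold wC
    simp only [pow_one]
    rw [Complex.div_re]
    simp [Complex.normSq_apply, Complex.add_re, Complex.add_im, Complex.mul_re, Complex.mul_im,
      Nat.factorial]
    field_simp
    nlinarith [hmul, sq_nonneg u, hpos, h2pos]
  | succ n hn ih =>
    rw [iteratedDeriv_succ]
    have heq : iteratedDeriv n (fun t => Real.log (1 + b * t ^ 2))
        = fun x => -2 * (Nat.factorial (n - 1)) * (wC b x ^ n).re := funext ih
    rw [heq]
    have hre : HasDerivAt (fun x => (wC b x ^ n).re) (((n : ℂ) * wC b u ^ (n + 1)).re) u :=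
      Complex.reCLM.hasFDerivAt.comp_hasDerivAt u (wC_pow_hasDeriv b u n hn)
    have := (hre.const_mul (-2 * (Nat.factorial (n - 1)) : ℝ)).deriv
    rw [this]
    have hfact : (n : ℝ) * (Nat.factorial (n - 1)) = Nat.factorial n := by
      rw [← Nat.mul_factorial_pred (n := n) (by omega)]
      push_cast
      ring
    simp only [Complex.mul_re, Complex.natCast_re, Complex.natCast_im, zero_mul, mul_zero,
      sub_zero]
    rw [Nat.add_sub_cancel]
    linear_combination (-2 * (wC b u ^ (n + 1)).re) * hfact

/-- For `b > 0` and `ℓ ≥ 1`, the `2ℓ`-th derivative of `u ↦ log(1+bu²)` equals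
`2(-1)^{ℓ-1} b^ℓ (2ℓ-1)!/(1+bu²)^ℓ · T_{2ℓ}(1/√(1+bu²))`, with `T_n` the Chebyshev
polynomial of the first kind. -/
theorem iteratedDeriv_log_one_add_sq_even (b : ℝ) (hb : 0 < b) (ℓ : ℕ) (hℓ : 1 ≤ ℓ)
    (u : ℝ) :
    iteratedDeriv (2 * ℓ) (fun t => Real.log (1 + b * t ^ 2)) u
      = 2 * (-1 : ℝ) ^ (ℓ - 1) * b ^ ℓ * (Nat.factorial (2 * ℓ - 1)) / (1 + b * u ^ 2) ^ ℓ *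
          (Polynomial.Chebyshev.T ℝ (2 * ℓ)).eval (1 / Real.sqrt (1 + b * u ^ 2)) := by
  have h2ℓ : 1 ≤ 2 * ℓ := by omega
  rw [main_formula b hb (2 * ℓ) h2ℓ u]
  set r : ℝ := 1 + b * u ^ 2 with hr
  have hrpos : (0:ℝ) < r := by positivity
  have hsr : Real.sqrt r > 0 := Real.sqrt_pos.mpr hrpos
  set c : ℝ := 1 / Real.sqrt r with hc
  set σ : ℝ := Real.sqrt b * u / Real.sqrt r with hσ
  have hs2 : Real.sqrt b ^ 2 = b := Real.sq_sqrt hb.le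
  have hr2 : Real.sqrt r ^ 2 = r := Real.sq_sqrt hrpos.le
  have hcs : c ^ 2 + σ ^ 2 = 1 := by
    rw [hc, hσ]
    field_simp
    rw [hs2, hr2, hr]
  -- decompose z
  set z : ℂ := 1 + (Real.sqrt b : ℂ) * I * u with hz
  have hzdec : z = (Real.sqrt r : ℂ) * ((c:ℂ) + σ * I) := by
    rw [hz, hc, hσ]
    push_cast
    have : (Real.sqrt r : ℂ) ≠ 0 := by exact_mod_cast hsr.ne'
    field_simp
  have hζ : ((c:ℂ) + σ*I) * ((c:ℂ) - σ*I) = 1 := by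
    have : ((c:ℂ)^2 + (σ:ℂ)^2) = 1 := by exact_mod_cast congrArg (Complex.ofReal) hcs
    have hI : (I:ℂ)^2 = -1 := Complex.I_sq
    linear_combination -hI * (σ:ℂ)^2 + this
  have hw2 : wC b u ^ 2 = ((-b : ℝ) : ℂ) / z ^ 2 := by
    unfold wC
    rw [← hz, div_pow]
    congr 1
    have : ((Real.sqrt b : ℝ):ℂ)^2 = (b:ℂ) := by exact_mod_cast congrArg (Complex.ofReal) hs2
    push_cast
    linear_combination (I:ℂ)^2 * this + (b:ℂ) * Complex.I_sq
  have hkey : wC b u ^ (2 * ℓ) = (((-b) ^ ℓ / r ^ ℓ : ℝ) : ℂ) * ((c:ℂ) - σ*I) ^ (2 * ℓ) := by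
    rw [pow_mul, hw2, div_pow, hzdec]
    rw [mul_pow, mul_pow, ← pow_mul, ← pow_mul]
    have hsrC : ((Real.sqrt r : ℝ):ℂ) ^ (2 * ℓ) = ((r:ℝ):ℂ) ^ ℓ := by
      rw [pow_mul]
      norm_cast
      rw [hr2]
    rw [hsrC]
    have hζn : ((c:ℂ) + σ*I) ^ (2*ℓ) * ((c:ℂ) - σ*I) ^ (2*ℓ) = 1 := by
      rw [← mul_pow, hζ, one_pow]
    have hζne : ((c:ℂ) + σ*I) ^ (2*ℓ) ≠ 0 := by
      intro h0; rw [h0, zero_mul] at hζn; exact one_ne_zero hζn.symm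
    have hrne : ((r:ℝ):ℂ) ^ ℓ ≠ 0 := by
      apply pow_ne_zero; exact_mod_cast hrpos.ne'
    push_cast
    field_simp
    linear_combination (-((-1:ℂ))^ℓ) * (b:ℂ)^ℓ * hζn
  rw [hkey, Complex.re_ofReal_mul]
  have hT : (((c:ℂ) - σ*I) ^ (2*ℓ)).re = (Polynomial.Chebyshev.T ℝ ((2*ℓ : ℕ):ℤ)).eval c := by
    rw [← cheb_re c (-σ) (by rw [neg_pow]; simpa using hcs) (2*ℓ)]
    push_cast
    ring_nf
  rw [hT]
  have hidx : ((2*ℓ : ℕ) : ℤ) = (2 * (ℓ:ℤ)) := by push_cast; ring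
  rw [hidx]
  have hℓ' : ℓ = (ℓ - 1) + 1 := (Nat.sub_add_cancel hℓ).symm
  have hsgn : (-b : ℝ) ^ ℓ = -((-1:ℝ)^(ℓ-1) * b ^ ℓ) := by
    rw [neg_pow b ℓ]
    have h1 : (-1:ℝ)^ℓ = -(-1:ℝ)^(ℓ-1) := by
      conv_lhs => rw [hℓ']
      rw [pow_succ]
      ring
    rw [h1]
    ring
  rw [hsgn]
  ring
end

section
/- For b > 0 and ℓ ≥ 0, the (2ℓ+1)-th derivative of u ↦ log(1 + bu²) equals 2(-1)^ℓ b^{ℓ+1} (2ℓ)! u / (1+bu²)^{ℓ+1} · U_{2ℓ}(1/√(1+bu²)), where U_n is the Chebyshev polynomial of the second kind. -/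
open Complex

noncomputable def gg (s : ℝ) (m : ℕ) (u : ℝ) : ℝ :=
  2 * ((((s * u : ℝ) : ℂ) + Complex.I) ^ (-(m : ℤ))).re

lemma ne_zero_aux (x : ℝ) : (x : ℂ) + Complex.I ≠ 0 := by
  intro h
  have := congrArg Complex.im h
  simp at this

lemma hasDerivAt_gg (s : ℝ) (m : ℕ) (u : ℝ) :
    HasDerivAt (gg s m) (-(m : ℝ) * s * gg s (m + 1) u) u := by
  have hne : ((s * u : ℝ) : ℂ) + Complex.I ≠ 0 := ne_zero_aux _
  have hne' : (s : ℂ) * (u : ℂ) + Complex.I ≠ 0 := by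
    simpa [Complex.ofReal_mul] using hne
  have h1 : HasDerivAt (fun z : ℂ => (s : ℂ) * z + Complex.I) (s : ℂ) ((u : ℝ) : ℂ) := by
    simpa using ((hasDerivAt_id ((u : ℝ) : ℂ)).const_mul (s : ℂ)).add_const Complex.I
  have h2 := hasDerivAt_zpow (-(m : ℤ)) ((s : ℂ) * (u : ℂ) + Complex.I) (Or.inl hne')
  have h3 := (h2.comp ((u : ℝ) : ℂ) h1).comp_ofReal
  have h4 := ((Complex.reCLM.hasFDerivAt.comp_hasDerivAt u h3).const_mul (2 : ℝ))
  have hzp : (-(m : ℤ) - 1) = (-((m + 1 : ℕ) : ℤ)) := by push_cast; ring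
  convert h4 using 1
  · rfl
  · rfl
  · funext t
    simp [gg, Complex.ofReal_mul]
  · rw [Complex.reCLM_apply, hzp, show ((s : ℂ) * (u : ℂ)) = ((s * u : ℝ) : ℂ) by push_cast; ring]
    simp only [gg, Complex.mul_re, Complex.intCast_re, Complex.intCast_im,
      Complex.ofReal_re, Complex.ofReal_im, Int.cast_neg, Int.cast_natCast]
    push_cast
    simp only [Complex.neg_re, Complex.natCast_re, Complex.neg_im, Complex.natCast_im]
    ring

lemma iter_gg (s : ℝ) (n : ℕ) :
    iteratedDeriv n (fun t => s * gg s 1 t)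
      = fun u => (-1 : ℝ) ^ n * n.factorial * s ^ (n + 1) * gg s (n + 1) u := by
  induction n with
  | zero => funext u; simp
  | succ n ih =>
    funext u
    rw [iteratedDeriv_succ, ih]
    have h := ((hasDerivAt_gg s (n + 1) u).const_mul
      ((-1 : ℝ) ^ n * n.factorial * s ^ (n + 1))).deriv
    rw [h]
    push_cast [Nat.factorial_succ]
    ring

lemma deriv_log_eq (b : ℝ) (hb : 0 < b) :
    deriv (fun t => Real.log (1 + b * t ^ 2)) = fun t => Real.sqrt b * gg (Real.sqrt b) 1 t := by
  funext t
  have hpos : (0 : ℝ) < 1 + b * t ^ 2 := by positivity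
  have hc : HasDerivAt (fun t : ℝ => 1 + b * t ^ 2) (b * (2 * t)) t := by
    simpa using ((hasDerivAt_pow 2 t).const_mul b).const_add 1
  rw [(hc.log hpos.ne').deriv]
  have hs : Real.sqrt b ^ 2 = b := Real.sq_sqrt hb.le
  have hsp : 0 < Real.sqrt b := Real.sqrt_pos.mpr hb
  rw [gg, show (-(1 : ℕ) : ℤ) = -1 by norm_num, zpow_neg_one, Complex.inv_re]
  simp only [Complex.add_re, Complex.ofReal_re, Complex.I_re, Complex.normSq_apply,
    Complex.add_im, Complex.ofReal_im, Complex.I_im]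
  have h2 : (Real.sqrt b * t) ^ 2 = b * t ^ 2 := by rw [mul_pow, hs]
  have hd : Real.sqrt b * t * (Real.sqrt b * t) + 1 ≠ 0 := by nlinarith [sq_nonneg (Real.sqrt b * t)]
  rw [show b = Real.sqrt b * Real.sqrt b from (Real.mul_self_sqrt hb.le).symm]
  field_simp
  rw [Real.sqrt_sq hsp.le]
  ring

lemma powReIm (x R θ : ℝ) (hR : R ≠ 0) (hsin : Real.sin θ = x / R) (hcos : Real.cos θ = 1 / R)
    (ℓ : ℕ) :
    (((x : ℂ) + Complex.I) ^ (2 * ℓ + 1)).re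
      = (-1 : ℝ) ^ ℓ * R ^ (2 * ℓ + 1) * Real.sin ((2 * ℓ + 1) * θ) := by
  set e := Complex.exp (((-θ : ℝ) : ℂ) * Complex.I) with he_def
  have he_re : e.re = Real.cos θ := by
    rw [he_def, Complex.exp_ofReal_mul_I_re, Real.cos_neg]
  have he_im : e.im = -Real.sin θ := by
    rw [he_def, Complex.exp_ofReal_mul_I_im, Real.sin_neg]
  set E := Complex.exp (((-((2 * ℓ + 1 : ℕ) * θ) : ℝ) : ℂ) * Complex.I) with hE_def
  have hE_re : E.re = Real.cos ((2 * ℓ + 1 : ℕ) * θ) := by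
    rw [hE_def, Complex.exp_ofReal_mul_I_re, Real.cos_neg]
  have hE_im : E.im = -Real.sin ((2 * ℓ + 1 : ℕ) * θ) := by
    rw [hE_def, Complex.exp_ofReal_mul_I_im, Real.sin_neg]
  have heE : e ^ (2 * ℓ + 1) = E := by
    rw [he_def, hE_def, ← Complex.exp_nat_mul]
    congr 1
    push_cast
    ring
  have hxI : ((x : ℝ) : ℂ) + Complex.I = (R : ℂ) * (Complex.I * e) := by
    apply Complex.ext
    · simp [Complex.mul_re, Complex.mul_im, he_re, he_im, hsin]
      field_simp
    · simp [Complex.mul_re, Complex.mul_im, he_re, he_im, hcos]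
      field_simp
  have h1re : (((-1 : ℂ)) ^ ℓ).re = (-1 : ℝ) ^ ℓ := by
    rw [show ((-1 : ℂ)) = ((-1 : ℝ) : ℂ) by norm_num, ← Complex.ofReal_pow, Complex.ofReal_re]
  have h1im : (((-1 : ℂ)) ^ ℓ).im = 0 := by
    rw [show ((-1 : ℂ)) = ((-1 : ℝ) : ℂ) by norm_num, ← Complex.ofReal_pow, Complex.ofReal_im]
  have hI : Complex.I ^ (2 * ℓ + 1) = ((-1 : ℝ) ^ ℓ : ℂ) * Complex.I := by
    rw [pow_succ, pow_mul, Complex.I_sq]; push_cast; ring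
  rw [hxI, mul_pow, mul_pow, heE, hI]
  simp [Complex.mul_re, Complex.mul_im, hE_re, hE_im, h1re, h1im,
    ← Complex.ofReal_pow, ← Complex.ofReal_mul]
  ring

lemma main_alg (b : ℝ) (hb : 0 < b) (ℓ : ℕ) (u : ℝ) :
    ((2 * ℓ).factorial : ℝ) * Real.sqrt b ^ (2 * ℓ + 1) * gg (Real.sqrt b) (2 * ℓ + 1) u
      = 2 * (-1 : ℝ) ^ ℓ * b ^ (ℓ + 1) * (Nat.factorial (2 * ℓ)) * u /
            (1 + b * u ^ 2) ^ (ℓ + 1) *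
          (Polynomial.Chebyshev.U ℝ (2 * ℓ)).eval (1 / Real.sqrt (1 + b * u ^ 2)) := by
  have hbu : (0 : ℝ) < 1 + b * u ^ 2 := by positivity
  set s := Real.sqrt b with hs_def
  have hs2 : s ^ 2 = b := Real.sq_sqrt hb.le
  have hsp : 0 < s := Real.sqrt_pos.mpr hb
  set x := s * u with hx_def
  have hx2 : x ^ 2 = b * u ^ 2 := by rw [hx_def, mul_pow, hs2]
  set R := Real.sqrt (1 + b * u ^ 2) with hR_def
  have hRpos : 0 < R := Real.sqrt_pos.mpr hbu
  have hR2 : R ^ 2 = 1 + b * u ^ 2 := Real.sq_sqrt hbu.le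
  have hR2x : R ^ 2 = x ^ 2 + 1 := by rw [hR2, hx2]; ring
  set θ := Real.arcsin (x / R) with hθ_def
  have hxle : |x / R| ≤ 1 := by
    rw [abs_div, abs_of_pos hRpos, div_le_one hRpos]
    nlinarith [_root_.sq_abs x, abs_nonneg x]
  have hsin : Real.sin θ = x / R := by
    rw [hθ_def]
    exact Real.sin_arcsin (abs_le.mp hxle).1 (abs_le.mp hxle).2
  have hcos : Real.cos θ = 1 / R := by
    rw [hθ_def, Real.cos_arcsin]
    rw [show 1 - (x / R) ^ 2 = (1 / R) ^ 2 by field_simp; linarith [hR2x]]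
    exact Real.sqrt_sq (by positivity)
  -- Chebyshev evaluation
  have hU : (Polynomial.Chebyshev.U ℝ (2 * ℓ)).eval (1 / R) * (x / R)
      = Real.sin ((2 * ℓ + 1 : ℕ) * θ) := by
    have h0 := Polynomial.Chebyshev.U_real_cos θ (2 * (ℓ : ℤ))
    rw [hcos] at h0
    rw [← hsin, h0]
    congr 1
    push_cast
    ring
  -- value of gg
  have hnormSq : Complex.normSq ((x : ℂ) + Complex.I) = R ^ 2 := by
    simp [Complex.normSq_apply]
    nlinarith [hR2x]
  have hgg : gg s (2 * ℓ + 1) u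
      = 2 * ((-1 : ℝ) ^ ℓ * R ^ (2 * ℓ + 1) * Real.sin ((2 * ℓ + 1 : ℕ) * θ)) / (R ^ 2) ^ (2 * ℓ + 1) := by
    rw [gg, ← hx_def, zpow_neg, zpow_natCast, Complex.inv_re,
      powReIm x R θ hRpos.ne' hsin hcos ℓ, map_pow, hnormSq]
    push_cast
    ring
  rw [hgg]
  rcases eq_or_ne u 0 with hu | hu
  · subst hu
    have : x = 0 := by rw [hx_def]; ring
    rw [hθ_def, this] at *
    simp
  · have hxne : x ≠ 0 := by
      rw [hx_def]; exact mul_ne_zero hsp.ne' hu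
    have hUval : (Polynomial.Chebyshev.U ℝ (2 * ℓ)).eval (1 / R)
        = Real.sin ((2 * ℓ + 1 : ℕ) * θ) * R / x := by
      field_simp at hU ⊢
      linarith [hU]
    rw [hUval, show (1 + b * u ^ 2) = R ^ 2 from hR2.symm, ← hs2, hx_def]
    field_simp
    ring

/-- For `b > 0` and `ℓ ≥ 0`, the `(2ℓ+1)`-th derivative of `u ↦ log(1+bu²)` equals
`2(-1)^ℓ b^{ℓ+1} (2ℓ)! u/(1+bu²)^{ℓ+1} · U_{2ℓ}(1/√(1+bu²))`, with `U_n` the Chebyshev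
polynomial of the second kind. -/
theorem iteratedDeriv_log_one_add_sq_odd (b : ℝ) (hb : 0 < b) (ℓ : ℕ) (u : ℝ) :
    iteratedDeriv (2 * ℓ + 1) (fun t => Real.log (1 + b * t ^ 2)) u
      = 2 * (-1 : ℝ) ^ ℓ * b ^ (ℓ + 1) * (Nat.factorial (2 * ℓ)) * u /
            (1 + b * u ^ 2) ^ (ℓ + 1) *
          (Polynomial.Chebyshev.U ℝ (2 * ℓ)).eval (1 / Real.sqrt (1 + b * u ^ 2)) := by
  rw [iteratedDeriv_succ', deriv_log_eq b hb, iter_gg]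
  have hneg : ((-1 : ℝ)) ^ (2 * ℓ) = 1 := by
    rw [pow_mul]; norm_num
  rw [hneg, one_mul]
  exact main_alg b hb ℓ u
end
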